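/- arXiv:1411.1096 — 4 statements merged into one kernel-verified Lean document; each statement's English description precedes it below -/
import Mathlib

section
/- Assume A is a special extension of E (finite symmetric integral relation algebras) and B is the subalgebra of C_E(A) generated by the atoms of C_E(A). Then every finitely generated subalgebra of B is finite, and every element of B differs from an element of the canonical copy E' of E inside C_E(A) (via a ↦ J(a,0)) by a join of finitely many atoms. -/
universe u v

/-- Non-associative relation algebras: Boolean algebras with a binary
relative multiplication `comp`, unary converse `conv`, and identity `ide`. -/
class NA (α : Type u) extends BooleanAlgebra α where
  comp : α → α → α
  conv : α → α
  ide : α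
  comp_ide : ∀ x : α, comp x ide = x
  ide_comp : ∀ x : α, comp ide x = x
  conv_conv : ∀ x : α, conv (conv x) = x
  conv_sup : ∀ x y : α, conv (x ⊔ y) = conv x ⊔ conv y
  comp_sup : ∀ x y z : α, comp x (y ⊔ z) = comp x y ⊔ comp x z
  sup_comp : ∀ x y z : α, comp (x ⊔ y) z = comp x z ⊔ comp y z
  peirce1 : ∀ x y z : α, comp x y ⊓ z = ⊥ ↔ comp (conv x) z ⊓ y = ⊥
  peirce2 : ∀ x y z : α, comp x y ⊓ z = ⊥ ↔ comp z (conv y) ⊓ x = ⊥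

/-- Relation algebras: associative non-associative relation algebras. -/
class RA (α : Type u) extends NA α where
  comp_assoc : ∀ x y z : α, comp (comp x y) z = comp x (comp y z)

namespace NA

variable {α : Type u} [NA α]

/-- The diversity element 0'. -/
def div : α := (ide : α)ᶜ

/-- Converse is the identity. -/
def Symmetric (α : Type u) [NA α] : Prop := ∀ x : α, conv x = x

/-- The identity 1' is an atom. -/
def Integral (α : Type u) [NA α] : Prop := IsAtom (ide : α)

/-- A diversity atom: an atom below 0'. -/
def DivAtom (x : α) : Prop := IsAtom x ∧ x ≤ (div : α)

/-- A subalgebra of a (non-associative) relation algebra. -/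
structure Subalgebra (α : Type u) [NA α] where
  carrier : Set α
  bot_mem : ⊥ ∈ carrier
  top_mem : ⊤ ∈ carrier
  ide_mem : ide ∈ carrier
  compl_mem : ∀ x ∈ carrier, xᶜ ∈ carrier
  sup_mem : ∀ x ∈ carrier, ∀ y ∈ carrier, x ⊔ y ∈ carrier
  comp_mem : ∀ x ∈ carrier, ∀ y ∈ carrier, comp x y ∈ carrier
  conv_mem : ∀ x ∈ carrier, conv x ∈ carrier

/-- An atom of a subalgebra: a minimal nonzero element of the subalgebra. -/
def Subalgebra.AtomOf (E : Subalgebra α) (a : α) : Prop :=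
  a ∈ E.carrier ∧ a ≠ ⊥ ∧ ∀ b ∈ E.carrier, b ≤ a → b = ⊥ ∨ b = a

/-- A diversity atom of a subalgebra. -/
def Subalgebra.DivAtomOf (E : Subalgebra α) (a : α) : Prop :=
  E.AtomOf a ∧ a ≤ (div : α)

/-- `α` is (a copy of) the algebra E^{23}_q with atoms `e 0 = 1', e 1, …, e (q-1)`:
symmetric, integral, distinct diversity atoms multiply to 0', and
`e i ; e i = (e i)ᶜ` for diversity atoms. -/
def IsE23 (q : ℕ) (e : Fin q → α) : Prop :=
  Symmetric α ∧ Integral α ∧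
  Function.Injective e ∧ (∀ i : Fin q, (i : ℕ) = 0 → e i = ide) ∧
  (∀ i, IsAtom (e i)) ∧
  (∀ x : α, IsAtom x → ∃ i, x = e i) ∧
  (∀ i j : Fin q, (i : ℕ) ≠ 0 → (j : ℕ) ≠ 0 → i ≠ j →
    comp (e i) (e j) = (div : α)) ∧
  (∀ i : Fin q, (i : ℕ) ≠ 0 → comp (e i) (e i) = (e i)ᶜ)

/-- The subalgebra `Q` of `α` is a copy of E^{23}_q with atoms `e i`. -/
def IsE23Sub (Q : Subalgebra α) (q : ℕ) (e : Fin q → α) : Prop :=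
  Function.Injective e ∧ (∀ i : Fin q, (i : ℕ) = 0 → e i = ide) ∧
  (∀ i, Q.AtomOf (e i)) ∧
  (∀ x : α, Q.AtomOf x → ∃ i, x = e i) ∧
  (∀ i j : Fin q, (i : ℕ) ≠ 0 → (j : ℕ) ≠ 0 → i ≠ j →
    comp (e i) (e j) = (div : α)) ∧
  (∀ i : Fin q, (i : ℕ) ≠ 0 → comp (e i) (e i) = (e i)ᶜ)

/-- `cov` is a cover map for the subalgebra `E`: it sends each atom of the
ambient algebra to the atom of `E` containing it. -/
def CoverMap (E : Subalgebra α) (cov : α → α) : Prop :=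
  ∀ x : α, IsAtom x → E.AtomOf (cov x) ∧ x ≤ cov x

/-- The ambient atomic algebra is obtained from the subalgebra `B` by
splitting, with cover map `cov`. -/
def Splitting (B : Subalgebra α) (cov : α → α) : Prop :=
  CoverMap B cov ∧
  (∀ x y : α, DivAtom x → DivAtom y →
    (x = conv y → comp x y = comp (cov x) (cov y)) ∧
    (x ≠ conv y → comp x y = comp (cov x) (cov y) ⊓ (div : α)))

/-- The ambient algebra is a special extension of its subalgebra `E`. -/
def SpecialExt (E : Subalgebra α) : Prop :=
  (∀ a b c : α, E.DivAtomOf a → E.DivAtomOf b → E.DivAtomOf c →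
    ¬(a = b ∧ b = c) → c ≤ comp a b →
    ∀ x y : α, IsAtom x → IsAtom y → x ≤ a → y ≤ b → c ≤ comp x y) ∧
  (∀ a : α, E.DivAtomOf a → a ≤ comp a a →
    ∀ x y : α, IsAtom x → IsAtom y → x ≤ a → y ≤ a → comp x y ⊓ a ≠ ⊥)

/-- A flexible atom. -/
def Flexible (a : α) : Prop :=
  DivAtom a ∧ comp a a = ⊤ ∧
  ∀ x : α, DivAtom x → x ≠ a → comp x a = (div : α)

/-- A flexible atom of a subalgebra. -/
def FlexibleOf (E : Subalgebra α) (a : α) : Prop :=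
  E.DivAtomOf a ∧ comp a a = ⊤ ∧
  ∀ x : α, E.DivAtomOf x → x ≠ a → comp x a = (div : α)

/-- A flexible trio of diversity atoms. -/
def FlexTrio (a b c : α) : Prop :=
  DivAtom a ∧ DivAtom b ∧ DivAtom c ∧ a ≠ b ∧ a ≠ c ∧ b ≠ c ∧
  comp a a = ⊤ ∧ comp b b = ⊤ ∧ comp c c = ⊤ ∧
  comp a b = (div : α) ∧ comp a c = (div : α) ∧ comp b c = (div : α) ∧
  ∀ x : α, IsAtom x → x ∉ ({(ide : α), a, b, c} : Set α) →
    (comp x a = (div : α) ∧ comp x b = (div : α)) ∨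
    (comp x a = (div : α) ∧ comp x c = (div : α)) ∨
    (comp x b = (div : α) ∧ comp x c = (div : α))

/-- A flexible trio of diversity atoms of a subalgebra. -/
def FlexTrioOf (E : Subalgebra α) (a b c : α) : Prop :=
  E.DivAtomOf a ∧ E.DivAtomOf b ∧ E.DivAtomOf c ∧ a ≠ b ∧ a ≠ c ∧ b ≠ c ∧
  comp a a = ⊤ ∧ comp b b = ⊤ ∧ comp c c = ⊤ ∧
  comp a b = (div : α) ∧ comp a c = (div : α) ∧ comp b c = (div : α) ∧
  ∀ d : α, E.DivAtomOf d → d ∉ ({a, b, c} : Set α) →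
    (comp d a = (div : α) ∧ comp d b = (div : α)) ∨
    (comp d a = (div : α) ∧ comp d c = (div : α)) ∨
    (comp d b = (div : α) ∧ comp d c = (div : α))

/-- Basic k-by-k matrices of atoms. -/
def BasicMatrix (k : ℕ) (μ : Fin k → Fin k → α) : Prop :=
  (∀ i j, IsAtom (μ i j)) ∧ (∀ i, μ i i ≤ (ide : α)) ∧
  (∀ i j, conv (μ i j) = μ j i) ∧
  (∀ i j l, μ i j ≤ comp (μ i l) (μ l j))

/-- The identity condition for a basic matrix. -/
def IdCond (k : ℕ) (μ : Fin k → Fin k → α) : Prop :=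
  ∀ i j, μ i j = (ide : α) ↔ i = j

/-- The 1-point extension property. -/
def OnePointExt (α : Type u) [NA α] : Prop :=
  ∀ (k : ℕ) (μ : Fin k → Fin k → α), BasicMatrix k μ → IdCond k μ →
  ∀ x y : α, DivAtom x → DivAtom y → ∀ i j : Fin k, i ≠ j → μ i j ≤ comp x y →
  ∃ μ' : Fin (k + 1) → Fin (k + 1) → α, BasicMatrix (k + 1) μ' ∧ IdCond (k + 1) μ' ∧
    (∀ l m : Fin k, μ' l.castSucc m.castSucc = μ l m) ∧
    μ' i.castSucc (Fin.last k) = x ∧ μ' (Fin.last k) j.castSucc = y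

/-- A representation of `α` over a base set `X`. -/
structure Representation (α : Type u) [NA α] (X : Type v) where
  toFun : α → Set (X × X)
  inj : Function.Injective toFun
  map_sup : ∀ a b : α, toFun (a ⊔ b) = toFun a ∪ toFun b
  map_compl : ∀ a : α, toFun aᶜ = toFun ⊤ \ toFun a
  map_comp : ∀ a b : α,
    toFun (comp a b) = {p | ∃ z, (p.1, z) ∈ toFun a ∧ (z, p.2) ∈ toFun b}
  map_conv : ∀ a : α, toFun (conv a) = {p | (p.2, p.1) ∈ toFun a}
  map_ide : toFun ide = {p | p ∈ toFun ⊤ ∧ p.1 = p.2}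

/-- A complete representation: preserves all existing joins. -/
def Representation.IsComplete {α : Type u} [NA α] {X : Type v}
    (r : Representation α X) : Prop :=
  ∀ (S : Set α) (s : α), IsLUB S s → r.toFun s = ⋃ a ∈ S, r.toFun a

/-- Representability. -/
def Representable (α : Type u) [NA α] : Prop :=
  ∃ X : Type u, Nonempty (Representation α X)

/-- A representation of a subalgebra `E` over a base set `X`. -/
structure SubRepresentation (E : Subalgebra α) (X : Type v) where
  toFun : α → Set (X × X)
  inj : ∀ x ∈ E.carrier, ∀ y ∈ E.carrier, toFun x = toFun y → x = y
  map_sup : ∀ x ∈ E.carrier, ∀ y ∈ E.carrier, toFun (x ⊔ y) = toFun x ∪ toFun y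
  map_compl : ∀ x ∈ E.carrier, toFun xᶜ = toFun ⊤ \ toFun x
  map_comp : ∀ x ∈ E.carrier, ∀ y ∈ E.carrier,
    toFun (comp x y) = {p | ∃ z, (p.1, z) ∈ toFun x ∧ (z, p.2) ∈ toFun y}
  map_conv : ∀ x ∈ E.carrier, toFun (conv x) = {p | (p.2, p.1) ∈ toFun x}
  map_ide : toFun ide = {p | p ∈ toFun ⊤ ∧ p.1 = p.2}

/-- A homomorphism of (non-associative) relation algebras. -/
structure Hom (α : Type u) (β : Type v) [NA α] [NA β] where
  toFun : α → β
  map_sup : ∀ a b : α, toFun (a ⊔ b) = toFun a ⊔ toFun b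
  map_compl : ∀ a : α, toFun aᶜ = (toFun a)ᶜ
  map_comp : ∀ a b : α, toFun (comp a b) = comp (toFun a) (toFun b)
  map_conv : ∀ a : α, toFun (conv a) = conv (toFun a)
  map_ide : toFun ide = ide

/-- The thinning relation T(i,j,k) ⟺ (i ≤ j = k) ∨ (j ≤ k = i) ∨ (k ≤ i = j). -/
def T3 (i j k : ℕ) : Prop :=
  (i ≤ j ∧ j = k) ∨ (j ≤ k ∧ k = i) ∨ (k ≤ i ∧ i = j)

/-- The type of diversity atoms of `α`. -/
abbrev DAt (α : Type u) [NA α] : Type u := {x : α // DivAtom x}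

/-- Atoms of the algebra C_E(A): the identity atom `none` together with
copies `some (x, i)` of each diversity atom `x` of `A`, for `i ∈ ω`. -/
abbrev CAtom (α : Type u) [NA α] : Type u := Option (DAt α × ℕ)

/-- The cycle relation of the atom structure of C_E(A), relative to the cover
map `cov` of the subalgebra E. -/
def Cyc (cov : α → α) : CAtom α → CAtom α → CAtom α → Prop
  | none, none, none => True
  | none, some p, some q => p = q
  | some p, none, some q => p = q
  | some p, some q, none => p = q
  | some p, some q, some r =>
      r.1.1 ≤ comp p.1.1 q.1.1 ∧
      (cov p.1.1 = cov q.1.1 ∧ cov q.1.1 = cov r.1.1 → T3 p.2 q.2 r.2)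
  | _, _, _ => False

/-- Relative multiplication in the complex algebra C_E(A). -/
def Ccomp (cov : α → α) (X Y : Set (CAtom α)) : Set (CAtom α) :=
  {w | ∃ u ∈ X, ∃ v ∈ Y, Cyc cov u v w}

/-- The element J(a, n) of C_E(A). -/
def Jel (a : α) (n : ℕ) : Set (CAtom α) :=
  {w | (∃ p : DAt α × ℕ, w = some p ∧ p.1.1 ≤ a ∧ n ≤ p.2) ∨
       (w = none ∧ (ide : α) ≤ a)}

/-- The atom set B_n of the finite subalgebra of C_E(A). -/
def Bset (E : Subalgebra α) (n : ℕ) : Set (Set (CAtom α)) :=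
  {s | s = ({none} : Set (CAtom α))} ∪
  {s | ∃ (x : DAt α) (i : ℕ), i < n ∧ s = {some (x, i)}} ∪
  {s | ∃ a : α, E.DivAtomOf a ∧ s = Jel a n}

/-- Subalgebra of C_E(A) generated by a set `G` of elements. -/
inductive GenFrom (cov : α → α) (G : Set (Set (CAtom α))) : Set (CAtom α) → Prop
  | base {s : Set (CAtom α)} : s ∈ G → GenFrom cov G s
  | bot : GenFrom cov G ∅
  | idel : GenFrom cov G ({none} : Set (CAtom α))
  | compl {s : Set (CAtom α)} : GenFrom cov G s → GenFrom cov G sᶜ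
  | sup {s t : Set (CAtom α)} : GenFrom cov G s → GenFrom cov G t →
      GenFrom cov G (s ∪ t)
  | cmp {s t : Set (CAtom α)} : GenFrom cov G s → GenFrom cov G t →
      GenFrom cov G (Ccomp cov s t)

/-- Membership in the subalgebra B of C_E(A) generated by the atoms. -/
def Gen (cov : α → α) : Set (CAtom α) → Prop :=
  GenFrom cov {s | ∃ w : CAtom α, s = {w}}

end NA

set_option linter.unusedSectionVars false

namespace NA

section Aux

variable {α : Type} [RA α] [Fintype α]

/-! ### Basic algebra lemmas -/

lemma comp_bot_right (x : α) : comp x (⊥ : α) = ⊥ := by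
  have h := (peirce1 x ⊥ (comp x ⊥)).mpr (by simp)
  simpa using h

lemma comp_bot_left (x : α) : comp (⊥ : α) x = ⊥ := by
  have h := (peirce2 ⊥ x (comp ⊥ x)).mpr (by simp)
  simpa using h

lemma comp_mono {x x' y y' : α} (hx : x ≤ x') (hy : y ≤ y') :
    comp x y ≤ comp x' y' := by
  have h1 : comp x y ≤ comp x' y := by
    have := sup_comp x x' y
    rw [sup_eq_right.mpr hx] at this
    rw [this]; exact le_sup_left
  have h2 : comp x' y ≤ comp x' y' := by
    have := comp_sup x' y y'
    rw [sup_eq_right.mpr hy] at this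
    rw [this]; exact le_sup_left
  exact le_trans h1 h2

lemma atom_inf (z : α) (hz : IsAtom z) (w : α) : z ⊓ w = ⊥ ∨ z ≤ w := by
  rcases (hz.le_iff.mp (inf_le_left : z ⊓ w ≤ z)) with h | h
  · exact Or.inl h
  · exact Or.inr (h ▸ inf_le_right)

lemma atom_le_compl {z : α} (hz : IsAtom z) (w : α) : z ≤ wᶜ ↔ ¬ z ≤ w := by
  constructor
  · intro h h'
    exact hz.1 (le_bot_iff.mp (by calc z ≤ w ⊓ wᶜ := le_inf h' h
                                    _ = ⊥ := inf_compl_eq_bot))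
  · intro h
    rcases atom_inf z hz w with h' | h'
    · exact le_compl_iff_disjoint_right.mpr (disjoint_iff.mpr h')
    · exact absurd h' h

lemma atom_le_sup {z : α} (hz : IsAtom z) (c d : α) :
    z ≤ c ⊔ d ↔ z ≤ c ∨ z ≤ d := by
  constructor
  · intro h
    by_cases hc : z ≤ c
    · exact Or.inl hc
    · right
      have h1 : z ≤ cᶜ := (atom_le_compl hz c).mpr hc
      calc z ≤ (c ⊔ d) ⊓ cᶜ := le_inf h h1
        _ = (c ⊓ cᶜ) ⊔ (d ⊓ cᶜ) := by rw [inf_sup_right]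
        _ ≤ d := by simp
  · rintro (h | h)
    · exact h.trans le_sup_left
    · exact h.trans le_sup_right

lemma atom_le_of_ne_bot {z w : α} (hz : IsAtom z) (h : z ⊓ w ≠ ⊥) : z ≤ w := by
  rcases atom_inf z hz w with h' | h'
  · exact absurd h' h
  · exact h'

lemma atom_inf_ne_bot {z w : α} (hz : IsAtom z) (h : z ≤ w) : z ⊓ w ≠ ⊥ := by
  rw [inf_eq_left.mpr h]; exact hz.1

lemma exists_atom_le {w : α} (hw : w ≠ ⊥) : ∃ z : α, IsAtom z ∧ z ≤ w := by
  have : IsAtomic α := Finite.to_isAtomic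
  rcases (IsAtomic.eq_bot_or_exists_atom_le w) with h | ⟨z, hz, hle⟩
  · exact absurd h hw
  · exact ⟨z, hz, hle⟩

/-- Peirce for symmetric algebras, left form. -/
lemma pl (hsym : Symmetric α) (x y z : α) : comp x y ⊓ z = ⊥ ↔ comp x z ⊓ y = ⊥ := by
  have := peirce1 x y z
  rwa [hsym x] at this

/-- Peirce for symmetric algebras, right form. -/
lemma pr (hsym : Symmetric α) (x y z : α) : comp x y ⊓ z = ⊥ ↔ comp z y ⊓ x = ⊥ := by
  have := peirce2 x y z
  rwa [hsym y] at this

lemma ide_ne_bot (hint : Integral α) : (ide : α) ≠ ⊥ := hint.1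

lemma not_ide_le_div (hint : Integral α) : ¬ (ide : α) ≤ (div : α) := by
  intro h
  exact hint.1 (le_bot_iff.mp (by
    calc (ide : α) ≤ ide ⊓ ideᶜ := le_inf le_rfl h
      _ = ⊥ := inf_compl_eq_bot))

end Aux

end NA

namespace NA

section Aux2

variable {α : Type} [RA α] [Fintype α]

lemma Subalgebra.inf_mem (E : Subalgebra α) {x y : α} (hx : x ∈ E.carrier)
    (hy : y ∈ E.carrier) : x ⊓ y ∈ E.carrier := by
  have h := E.compl_mem _ (E.sup_mem _ (E.compl_mem _ hx) _ (E.compl_mem _ hy))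
  simpa using h

lemma div_mem (E : Subalgebra α) : (div : α) ∈ E.carrier :=
  E.compl_mem _ E.ide_mem

/-- Two atoms of E with a common nonzero lower bound are equal. -/
lemma Eatoms_eq {E : Subalgebra α} {a b : α} (ha : E.AtomOf a) (hb : E.AtomOf b)
    (h : a ⊓ b ≠ ⊥) : a = b := by
  have hmem : a ⊓ b ∈ E.carrier := E.inf_mem ha.1 hb.1
  have h1 := ha.2.2 _ hmem inf_le_left
  have h2 := hb.2.2 _ hmem inf_le_right
  rcases h1 with h1 | h1
  · exact absurd h1 h
  · rcases h2 with h2 | h2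
    · exact absurd h2 h
    · rw [← h1, h2]

/-- Every atom of E is either the identity or below diversity. -/
lemma Eatom_div_or_ide (hint : Integral α) {E : Subalgebra α} {a : α}
    (ha : E.AtomOf a) : a ≤ (div : α) ∨ a = ide := by
  have hmem : a ⊓ ide ∈ E.carrier := E.inf_mem ha.1 E.ide_mem
  rcases ha.2.2 _ hmem inf_le_left with h | h
  · left
    exact le_compl_iff_disjoint_right.mpr (disjoint_iff.mpr h)
  · right
    have hle : a ≤ ide := by rw [← h]; exact inf_le_right
    rcases hint.le_iff.mp hle with h' | h'
    · exact absurd h' ha.2.1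
    · exact h'

/-- If an atom is below an element of E, so is its cover. -/
lemma covLe {E : Subalgebra α} {cov : α → α} (hcov : CoverMap E cov) {z c : α}
    (hz : IsAtom z) (hc : c ∈ E.carrier) (h : z ≤ c) : cov z ≤ c := by
  obtain ⟨hA, hle⟩ := hcov z hz
  have hmem : cov z ⊓ c ∈ E.carrier := E.inf_mem hA.1 hc
  rcases hA.2.2 _ hmem inf_le_left with h' | h'
  · exact absurd h' (by
      intro hb
      exact hz.1 (le_bot_iff.mp (hb ▸ le_inf hle h)))
  · rw [← h']; exact inf_le_right

/-- An atom below a diversity atom of E has that atom as its cover. -/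
lemma covEq {E : Subalgebra α} {cov : α → α} (hcov : CoverMap E cov) {z a : α}
    (hz : IsAtom z) (ha : E.AtomOf a) (h : z ≤ a) : cov z = a :=
  Eatoms_eq (hcov z hz).1 ha (by
    intro hb
    exact hz.1 (le_bot_iff.mp (hb ▸ le_inf (hcov z hz).2 h)))

/-- The cover of an atom below diversity is a diversity atom of E. -/
lemma covDiv (hint : Integral α) {E : Subalgebra α} {cov : α → α}
    (hcov : CoverMap E cov) {z : α} (hz : IsAtom z) (hzd : z ≤ (div : α)) :
    E.DivAtomOf (cov z) := by
  refine ⟨(hcov z hz).1, ?_⟩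
  rcases Eatom_div_or_ide hint (hcov z hz).1 with h | h
  · exact h
  · exfalso
    have : z ≤ ide ⊓ div := le_inf (h ▸ (hcov z hz).2) hzd
    rw [div, inf_compl_eq_bot] at this
    exact hz.1 (le_bot_iff.mp this)

lemma le_cov {E : Subalgebra α} {cov : α → α} (hcov : CoverMap E cov) {z : α}
    (hz : IsAtom z) : z ≤ cov z := (hcov z hz).2

lemma le_Eatom_iff_cov {E : Subalgebra α} {cov : α → α} (hcov : CoverMap E cov)
    {z a : α} (hz : IsAtom z) (ha : E.AtomOf a) : z ≤ a ↔ cov z = a := by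
  constructor
  · exact covEq hcov hz ha
  · intro h; rw [← h]; exact (hcov z hz).2

/-- The cross-cover law: from special extension condition (i). -/
lemma cross (hint : Integral α) {E : Subalgebra α} {cov : α → α}
    (hcov : CoverMap E cov) (hspec : SpecialExt E) {x y z : α}
    (hx : IsAtom x) (hy : IsAtom y) (hz : IsAtom z)
    (hxd : x ≤ (div : α)) (hyd : y ≤ (div : α)) (hzd : z ≤ (div : α))
    (hne : ¬ (cov x = cov y ∧ cov y = cov z)) :
    z ≤ comp x y ↔ cov z ≤ comp (cov x) (cov y) := by
  constructor
  · intro h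
    refine covLe hcov hz (E.comp_mem _ (hcov x hx).1.1 _ (hcov y hy).1.1) ?_
    exact h.trans (comp_mono (le_cov hcov hx) (le_cov hcov hy))
  · intro h
    have := hspec.1 (cov x) (cov y) (cov z) (covDiv hint hcov hx hxd)
      (covDiv hint hcov hy hyd) (covDiv hint hcov hz hzd) hne h
      x y hx hy (le_cov hcov hx) (le_cov hcov hy)
    exact (le_cov hcov hz).trans this

/-- All-or-nothing for a diversity atom of E. -/
lemma aon {E : Subalgebra α} {a : α} (ha : E.AtomOf a) {w : α}
    (hw : w ∈ E.carrier) (h : a ⊓ w ≠ ⊥) : a ≤ w := by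
  rcases ha.2.2 _ (E.inf_mem ha.1 hw) inf_le_left with h' | h'
  · exact absurd h' h
  · rw [← h']; exact inf_le_right

end Aux2

end NA

namespace NA

section Aux3

variable {α : Type} [RA α] [Fintype α]

/-- The finitely many atoms of C_E(A) of level below `m`. -/
def lowAt (α : Type) [RA α] (m : ℕ) : Set (CAtom α) :=
  {w | w = none ∨ ∃ z : DAt α, ∃ i : ℕ, i < m ∧ w = some (z, i)}

lemma none_mem_lowAt (m : ℕ) : (none : CAtom α) ∈ lowAt α m := Or.inl rfl

lemma some_mem_lowAt {m : ℕ} {z : DAt α} {i : ℕ} :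
    some (z, i) ∈ lowAt α m ↔ i < m := by
  constructor
  · rintro (h | ⟨z', i', hi, h⟩)
    · exact absurd h (by simp)
    · obtain ⟨rfl, rfl⟩ : z = z' ∧ i = i' := by
        constructor <;> [skip; skip] <;> · injection h with h'; cases h'; rfl
      exact hi
  · intro h; exact Or.inr ⟨z, i, h, rfl⟩

lemma lowAt_mono {m m' : ℕ} (h : m ≤ m') : lowAt α m ⊆ lowAt α m' := by
  rintro w (hw | ⟨z, i, hi, hw⟩)
  · exact Or.inl hw
  · exact Or.inr ⟨z, i, lt_of_lt_of_le hi h, hw⟩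

lemma lowAt_finite (m : ℕ) : (lowAt α m).Finite := by
  have : lowAt α m ⊆ insert none ((fun p : DAt α × ℕ => some p) ''
      (Set.univ ×ˢ Set.Iio m)) := by
    rintro w (hw | ⟨z, i, hi, hw⟩)
    · exact hw ▸ Set.mem_insert _ _
    · exact Set.mem_insert_of_mem _ ⟨(z, i), ⟨Set.mem_univ _, hi⟩, hw.symm⟩
  exact Set.Finite.subset (Set.Finite.insert _
    (Set.Finite.image _ (Set.Finite.prod Set.finite_univ (Set.finite_Iio m)))) this

lemma some_mem_Jel {c : α} {n : ℕ} {z : DAt α} {k : ℕ} :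
    some (z, k) ∈ Jel c n ↔ z.1 ≤ c ∧ n ≤ k := by
  constructor
  · rintro (⟨p, hp, h1, h2⟩ | ⟨h, _⟩)
    · injection hp with hp'; cases hp'; exact ⟨h1, h2⟩
    · exact absurd h (by simp)
  · intro h; exact Or.inl ⟨(z, k), rfl, h.1, h.2⟩

lemma none_mem_Jel {c : α} {n : ℕ} : (none : CAtom α) ∈ Jel c n ↔ (ide : α) ≤ c := by
  constructor
  · rintro (⟨p, hp, _⟩ | ⟨_, h⟩)
    · exact absurd hp (by simp)
    · exact h
  · intro h; exact Or.inr ⟨rfl, h⟩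

lemma none_not_mem_Jel (hint : Integral α) {c : α} (hc : c ≤ (div : α)) {n : ℕ} :
    (none : CAtom α) ∉ Jel c n := fun h =>
  not_ide_le_div hint ((none_mem_Jel.mp h).trans hc)

lemma Jel_bot (hint : Integral α) (n : ℕ) : Jel (⊥ : α) n = ∅ := by
  ext w
  rcases w with _ | ⟨z, k⟩
  · simp only [Set.mem_empty_iff_false, iff_false]
    exact none_not_mem_Jel hint bot_le
  · simp only [Set.mem_empty_iff_false, iff_false, some_mem_Jel]
    rintro ⟨h, -⟩
    exact z.2.1.1 (le_bot_iff.mp h)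

lemma Jel_sup (hint : Integral α) (c d : α) (n : ℕ) :
    Jel (c ⊔ d) n = Jel c n ∪ Jel d n := by
  ext w
  rcases w with _ | ⟨z, k⟩
  · simp only [Set.mem_union, none_mem_Jel, atom_le_sup hint]
  · simp only [Set.mem_union, some_mem_Jel, atom_le_sup z.2.1]
    tauto

/-- If membership at high levels is governed by `e`, split off `Jel e m`. -/
lemma split_of_high (hint : Integral α) (R : Set (CAtom α)) (e : α)
    (he : e ≤ (div : α)) (m : ℕ)
    (h : ∀ (z : DAt α) (k : ℕ), m ≤ k → (some (z, k) ∈ R ↔ z.1 ≤ e)) :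
    R = (R ∩ lowAt α m) ∪ Jel e m := by
  ext w
  rcases w with _ | ⟨z, k⟩
  · simp only [Set.mem_union, Set.mem_inter_iff]
    constructor
    · intro hw; exact Or.inl ⟨hw, none_mem_lowAt m⟩
    · rintro (⟨hw, -⟩ | hw)
      · exact hw
      · exact absurd hw (none_not_mem_Jel hint he)
  · simp only [Set.mem_union, Set.mem_inter_iff, some_mem_Jel, some_mem_lowAt]
    rcases lt_or_ge k m with hk | hk
    · constructor
      · intro hw; exact Or.inl ⟨hw, hk⟩
      · rintro (⟨hw, -⟩ | ⟨-, hw⟩)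
        · exact hw
        · omega
    · constructor
      · intro hw; exact Or.inr ⟨(h z k hk).mp hw, hk⟩
      · rintro (⟨hw, -⟩ | ⟨hw, -⟩)
        · exact hw
        · exact (h z k hk).mpr hw

lemma Jel_drop (hint : Integral α) {c : α} (hc : c ≤ (div : α)) {n m : ℕ}
    (h : n ≤ m) : Jel c n = (Jel c n ∩ lowAt α m) ∪ Jel c m := by
  refine split_of_high hint _ _ hc m ?_
  intro z k hk
  rw [some_mem_Jel]
  exact and_iff_left (le_trans h hk)

end Aux3

end NA

namespace NA

section Aux4

variable {α : Type} [RA α] [Fintype α]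

lemma cyc_none_left (cov : α → α) (v w : CAtom α) :
    Cyc cov none v w ↔ w = v := by
  rcases v with _ | p <;> rcases w with _ | q <;> simp [Cyc, eq_comm]

lemma cyc_none_mid (cov : α → α) (u w : CAtom α) :
    Cyc cov u none w ↔ w = u := by
  rcases u with _ | p <;> rcases w with _ | q <;> simp [Cyc, eq_comm]

lemma cyc_ss_none (cov : α → α) (p q : DAt α × ℕ) :
    Cyc cov (some p) (some q) none ↔ p = q := by simp [Cyc]

lemma cyc_ss_some (cov : α → α) (p q r : DAt α × ℕ) :
    Cyc cov (some p) (some q) (some r) ↔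
      r.1.1 ≤ comp p.1.1 q.1.1 ∧
      (cov p.1.1 = cov q.1.1 ∧ cov q.1.1 = cov r.1.1 → T3 p.2 q.2 r.2) := by
  simp [Cyc]

lemma mem_Ccomp {cov : α → α} {X Y : Set (CAtom α)} {w : CAtom α} :
    w ∈ Ccomp cov X Y ↔ ∃ u ∈ X, ∃ v ∈ Y, Cyc cov u v w := Iff.rfl

lemma Ccomp_none_left (cov : α → α) (Y : Set (CAtom α)) :
    Ccomp cov {none} Y = Y := by
  ext w
  rw [mem_Ccomp]
  constructor
  · rintro ⟨u, hu, v, hv, hc⟩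
    rcases Set.mem_singleton_iff.mp hu with rfl
    rwa [(cyc_none_left cov v w).mp hc]
  · intro hw
    exact ⟨none, rfl, w, hw, (cyc_none_left cov w w).mpr rfl⟩

lemma Ccomp_none_right (cov : α → α) (X : Set (CAtom α)) :
    Ccomp cov X {none} = X := by
  ext w
  rw [mem_Ccomp]
  constructor
  · rintro ⟨u, hu, v, hv, hc⟩
    rcases Set.mem_singleton_iff.mp hv with rfl
    rwa [(cyc_none_mid cov u w).mp hc]
  · intro hw
    exact ⟨w, hw, none, rfl, (cyc_none_mid cov w w).mpr rfl⟩

lemma Ccomp_biUnion_left {ι : Type*} (cov : α → α) (S : Set ι)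
    (f : ι → Set (CAtom α)) (Y : Set (CAtom α)) :
    Ccomp cov (⋃ a ∈ S, f a) Y = ⋃ a ∈ S, Ccomp cov (f a) Y := by
  ext w
  constructor
  · rintro ⟨u, hu, v, hv, hc⟩
    obtain ⟨a, ha, hu⟩ := Set.mem_iUnion₂.mp hu
    exact Set.mem_iUnion₂.mpr ⟨a, ha, u, hu, v, hv, hc⟩
  · intro hw
    obtain ⟨a, ha, u, hu, v, hv, hc⟩ := Set.mem_iUnion₂.mp hw
    exact ⟨u, Set.mem_iUnion₂.mpr ⟨a, ha, hu⟩, v, hv, hc⟩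

lemma Ccomp_biUnion_right {ι : Type*} (cov : α → α) (S : Set ι)
    (f : ι → Set (CAtom α)) (X : Set (CAtom α)) :
    Ccomp cov X (⋃ a ∈ S, f a) = ⋃ a ∈ S, Ccomp cov X (f a) := by
  ext w
  constructor
  · rintro ⟨u, hu, v, hv, hc⟩
    obtain ⟨a, ha, hv⟩ := Set.mem_iUnion₂.mp hv
    exact Set.mem_iUnion₂.mpr ⟨a, ha, u, hu, v, hv, hc⟩
  · intro hw
    obtain ⟨a, ha, u, hu, v, hv, hc⟩ := Set.mem_iUnion₂.mp hw
    exact ⟨u, hu, v, Set.mem_iUnion₂.mpr ⟨a, ha, hv⟩, hc⟩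

lemma Ccomp_union_left (cov : α → α) (A B Y : Set (CAtom α)) :
    Ccomp cov (A ∪ B) Y = Ccomp cov A Y ∪ Ccomp cov B Y := by
  ext w
  simp only [Set.mem_union]
  constructor
  · rintro ⟨u, hu | hu, v, hv, hc⟩
    · exact Or.inl ⟨u, hu, v, hv, hc⟩
    · exact Or.inr ⟨u, hu, v, hv, hc⟩
  · rintro (⟨u, hu, v, hv, hc⟩ | ⟨u, hu, v, hv, hc⟩)
    · exact ⟨u, Or.inl hu, v, hv, hc⟩
    · exact ⟨u, Or.inr hu, v, hv, hc⟩

lemma Ccomp_union_right (cov : α → α) (X A B : Set (CAtom α)) :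
    Ccomp cov X (A ∪ B) = Ccomp cov X A ∪ Ccomp cov X B := by
  ext w
  simp only [Set.mem_union]
  constructor
  · rintro ⟨u, hu, v, hv | hv, hc⟩
    · exact Or.inl ⟨u, hu, v, hv, hc⟩
    · exact Or.inr ⟨u, hu, v, hv, hc⟩
  · rintro (⟨u, hu, v, hv, hc⟩ | ⟨u, hu, v, hv, hc⟩)
    · exact ⟨u, hu, v, Or.inl hv, hc⟩
    · exact ⟨u, hu, v, Or.inr hv, hc⟩

lemma Ccomp_empty_left (cov : α → α) (Y : Set (CAtom α)) :
    Ccomp cov ∅ Y = ∅ := by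
  ext w
  simp only [Set.mem_empty_iff_false, iff_false]
  rintro ⟨u, hu, -, -, -⟩
  exact hu

lemma Ccomp_empty_right (cov : α → α) (X : Set (CAtom α)) :
    Ccomp cov X ∅ = ∅ := by
  ext w
  simp only [Set.mem_empty_iff_false, iff_false]
  rintro ⟨-, -, v, hv, -⟩
  exact hv

/-- The normal form predicate: `s` is a subset of `lowAt m` together with
`Jel c m` for some `c ∈ E` below diversity. -/
def Pf (E : Subalgebra α) (m : ℕ) (s : Set (CAtom α)) : Prop :=
  ∃ F c, F ⊆ lowAt α m ∧ c ∈ E.carrier ∧ c ≤ (div : α) ∧ s = F ∪ Jel c m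

lemma Pf_mono (hint : Integral α) {E : Subalgebra α} {m m' : ℕ} (h : m ≤ m')
    {s : Set (CAtom α)} (hs : Pf E m s) : Pf E m' s := by
  obtain ⟨F, c, hF, hc, hcd, rfl⟩ := hs
  refine ⟨F ∪ (Jel c m ∩ lowAt α m'), c, ?_, hc, hcd, ?_⟩
  · exact Set.union_subset (hF.trans (lowAt_mono h)) Set.inter_subset_right
  · rw [Set.union_assoc, ← Jel_drop hint hcd h]

lemma Pf_empty (hint : Integral α) (E : Subalgebra α) (m : ℕ) :
    Pf E m (∅ : Set (CAtom α)) :=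
  ⟨∅, ⊥, Set.empty_subset _, E.bot_mem, bot_le, by rw [Jel_bot hint, Set.union_empty]⟩

lemma Pf_single (hint : Integral α) (E : Subalgebra α) {m : ℕ} {w : CAtom α}
    (hw : w ∈ lowAt α m) : Pf E m ({w} : Set (CAtom α)) :=
  ⟨{w}, ⊥, Set.singleton_subset_iff.mpr hw, E.bot_mem, bot_le,
    by rw [Jel_bot hint, Set.union_empty]⟩

lemma Pf_sup (hint : Integral α) {E : Subalgebra α} {m : ℕ} {s t : Set (CAtom α)}
    (hs : Pf E m s) (ht : Pf E m t) : Pf E m (s ∪ t) := by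
  obtain ⟨F, c, hF, hc, hcd, rfl⟩ := hs
  obtain ⟨G, d, hG, hd, hdd, rfl⟩ := ht
  refine ⟨F ∪ G, c ⊔ d, Set.union_subset hF hG, E.sup_mem _ hc _ hd,
    sup_le hcd hdd, ?_⟩
  rw [Jel_sup hint]
  ext w
  simp only [Set.mem_union]
  tauto

lemma Pf_compl (hint : Integral α) {E : Subalgebra α} {m : ℕ} {s : Set (CAtom α)}
    (hs : Pf E m s) : Pf E m sᶜ := by
  obtain ⟨F, c, hF, hc, hcd, rfl⟩ := hs
  refine ⟨lowAt α m \ F, cᶜ ⊓ div, Set.diff_subset, E.inf_mem (E.compl_mem _ hc)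
    (div_mem E), inf_le_right, ?_⟩
  ext w
  have key : ∀ w : CAtom α, w ∈ (F ∪ Jel c m)ᶜ ↔ (w ∉ F ∧ w ∉ Jel c m) := by
    intro w
    rw [Set.mem_compl_iff, Set.mem_union]
    tauto
  rw [key, Set.mem_union, Set.mem_diff]
  rcases w with _ | ⟨z, k⟩
  · have h1 : (none : CAtom α) ∉ Jel c m := none_not_mem_Jel hint hcd
    have h2 : (none : CAtom α) ∉ Jel (cᶜ ⊓ div) m := none_not_mem_Jel hint inf_le_right
    constructor
    · rintro ⟨hF', -⟩; exact Or.inl ⟨none_mem_lowAt m, hF'⟩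
    · rintro (⟨-, hF'⟩ | hJ)
      · exact ⟨hF', h1⟩
      · exact absurd hJ h2
  · rw [some_mem_Jel, some_mem_Jel, some_mem_lowAt]
    rcases lt_or_ge k m with hk | hk
    · constructor
      · rintro ⟨hF', -⟩; exact Or.inl ⟨hk, hF'⟩
      · rintro (⟨-, hF'⟩ | ⟨-, hm⟩)
        · exact ⟨hF', fun h => by omega⟩
        · omega
    · have hzF : some (z, k) ∉ F := fun h => by
        have := some_mem_lowAt.mp (hF h); omega
      constructor
      · rintro ⟨-, hJ⟩
        exact Or.inr ⟨le_inf ((atom_le_compl z.2.1 c).mpr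
          fun h' => hJ ⟨h', hk⟩) z.2.2, hk⟩
      · rintro (⟨hk', -⟩ | ⟨hzc, -⟩)
        · omega
        · exact ⟨hzF, fun h =>
            (atom_le_compl z.2.1 c).mp (hzc.trans inf_le_left) h.1⟩

lemma Pf_biUnion (hint : Integral α) {E : Subalgebra α} {m : ℕ} {ι : Type*}
    {S : Set ι} (hS : S.Finite) {f : ι → Set (CAtom α)}
    (h : ∀ a ∈ S, Pf E m (f a)) : Pf E m (⋃ a ∈ S, f a) := by
  revert h
  induction S, hS using Set.Finite.induction_on with
  | empty => intro _; simpa using Pf_empty hint E m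
  | @insert a S ha hS ih =>
    intro h
    rw [Set.biUnion_insert]
    exact Pf_sup hint (h a (Set.mem_insert _ _))
      (ih fun b hb => h b (Set.mem_insert_of_mem _ hb))

end Aux4

end NA

namespace NA

section Aux5

variable {α : Type} [RA α] [Fintype α]

lemma T3_bound {i j k : ℕ} (h : T3 i j k) : k ≤ max i j := by
  rcases h with ⟨h1, h2⟩ | ⟨h1, h2⟩ | ⟨h1, h2⟩ <;> omega

variable (hsym : Symmetric α) (hint : Integral α) {E : Subalgebra α}
  {cov : α → α}

/-- From `z ≤ x;y` deduce `y ≤ x;z` (symmetric Peirce transposition). -/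
lemma trans_pl (hsym : Symmetric α) {x y z : α} (hy : IsAtom y) (hz : IsAtom z)
    (h : z ≤ comp x y) : y ≤ comp x z := by
  have h3 : comp x y ⊓ z ≠ ⊥ := by
    rw [inf_comm]; exact atom_inf_ne_bot hz h
  have h4 : comp x z ⊓ y ≠ ⊥ := fun h0 => h3 ((pl hsym _ _ _).mpr h0)
  exact atom_le_of_ne_bot hy (by rwa [inf_comm] at h4)

/-- From `z ≤ x;y` deduce `x ≤ z;y` (symmetric Peirce transposition). -/
lemma trans_pr (hsym : Symmetric α) {x y z : α} (hx : IsAtom x) (hz : IsAtom z)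
    (h : z ≤ comp x y) : x ≤ comp z y := by
  have h3 : comp x y ⊓ z ≠ ⊥ := by
    rw [inf_comm]; exact atom_inf_ne_bot hz h
  have h4 : comp z y ⊓ x ≠ ⊥ := fun h0 => h3 ((pr hsym _ _ _).mpr h0)
  exact atom_le_of_ne_bot hx (by rwa [inf_comm] at h4)

/-- Core 1: composition of two singleton diversity atoms. -/
lemma Pf_core1 (hsym : Symmetric α) (hint : Integral α) (hcov : CoverMap E cov)
    (hspec : SpecialExt E) {m i j : ℕ} (x y : DAt α) (hi : i < m) (hj : j < m) :
    Pf E m (Ccomp cov {some (x, i)} {some (y, j)}) := by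
  classical
  set R := Ccomp cov ({some (x, i)} : Set (CAtom α)) {some (y, j)} with hR
  have hxE : cov x.1 ∈ E.carrier := (hcov x.1 x.2.1).1.1
  have hyE : cov y.1 ∈ E.carrier := (hcov y.1 y.2.1).1.1
  have hcompE : comp (cov x.1) (cov y.1) ∈ E.carrier := E.comp_mem _ hxE _ hyE
  set e : α := if cov x.1 = cov y.1 then comp (cov x.1) (cov y.1) ⊓ div ⊓ (cov x.1)ᶜ
    else comp (cov x.1) (cov y.1) ⊓ div with he
  have heE : e ∈ E.carrier := by
    rw [he]
    split
    · exact E.inf_mem (E.inf_mem hcompE (div_mem E)) (E.compl_mem _ hxE)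
    · exact E.inf_mem hcompE (div_mem E)
  have hed : e ≤ (div : α) := by
    rw [he]; split
    · exact inf_le_left.trans inf_le_right
    · exact inf_le_right
  have memR : ∀ w, w ∈ R ↔ Cyc cov (some (x, i)) (some (y, j)) w := by
    intro w
    constructor
    · rintro ⟨u, rfl, v, rfl, hc⟩
      exact hc
    · intro hc
      exact ⟨_, rfl, _, rfl, hc⟩
  have high : ∀ (z : DAt α) (k : ℕ), m ≤ k → (some (z, k) ∈ R ↔ z.1 ≤ e) := by
    intro z k hk
    rw [memR, cyc_ss_some]
    have hT : ¬ T3 i j k := fun h => by have := T3_bound h; omega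
    by_cases hxy : cov x.1 = cov y.1
    · rw [he, if_pos hxy]
      constructor
      · rintro ⟨h1, h2⟩
        have hzy : cov y.1 ≠ cov z.1 := fun h => hT (h2 ⟨hxy, h⟩)
        refine le_inf (le_inf ?_ z.2.2) ?_
        · exact h1.trans (comp_mono (le_cov hcov x.2.1) (le_cov hcov y.2.1))
        · rw [atom_le_compl z.2.1]
          intro hzb
          have : cov z.1 = cov x.1 := covEq hcov z.2.1 (hcov x.1 x.2.1).1 hzb
          exact hzy (hxy ▸ this.symm)
      · intro hz
        have hzx : ¬ z.1 ≤ cov x.1 := (atom_le_compl z.2.1 _).mp (hz.trans inf_le_right)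
        have hne : ¬ (cov x.1 = cov y.1 ∧ cov y.1 = cov z.1) := by
          rintro ⟨-, h2⟩
          exact hzx (hxy ▸ h2 ▸ le_cov hcov z.2.1)
        refine ⟨?_, fun hcc => absurd hcc hne⟩
        refine (cross hint hcov hspec x.2.1 y.2.1 z.2.1 x.2.2 y.2.2 z.2.2 hne).mpr ?_
        exact covLe hcov z.2.1 hcompE (hz.trans (inf_le_left.trans inf_le_left))
    · rw [he, if_neg hxy]
      have hne : ¬ (cov x.1 = cov y.1 ∧ cov y.1 = cov z.1) := fun h => hxy h.1
      constructor
      · rintro ⟨h1, -⟩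
        exact le_inf (h1.trans (comp_mono (le_cov hcov x.2.1) (le_cov hcov y.2.1))) z.2.2
      · intro hz
        refine ⟨?_, fun hcc => absurd hcc hne⟩
        refine (cross hint hcov hspec x.2.1 y.2.1 z.2.1 x.2.2 y.2.2 z.2.2 hne).mpr ?_
        exact covLe hcov z.2.1 hcompE (hz.trans inf_le_left)
  rw [split_of_high hint R e hed m high]
  exact ⟨R ∩ lowAt α m, e, Set.inter_subset_right, heE, hed, rfl⟩
end Aux5

end NA

namespace NA

section Aux6

variable {α : Type} [RA α] [Fintype α] {E : Subalgebra α} {cov : α → α}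

/-- Core 2: composition of a singleton with a `Jel` atom. -/
lemma Pf_core2 (hsym : Symmetric α) (hint : Integral α) (hcov : CoverMap E cov)
    (hspec : SpecialExt E) {m i : ℕ} (x : DAt α) (hi : i < m) {b : α}
    (hb : E.DivAtomOf b) : Pf E m (Ccomp cov {some (x, i)} (Jel b m)) := by
  classical
  set R := Ccomp cov ({some (x, i)} : Set (CAtom α)) (Jel b m) with hR
  have hxE : cov x.1 ∈ E.carrier := (hcov x.1 x.2.1).1.1
  have hcompE : comp (cov x.1) b ∈ E.carrier := E.comp_mem _ hxE _ hb.1.1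
  set e : α := comp (cov x.1) b ⊓ div with he
  have heE : e ∈ E.carrier := E.inf_mem hcompE (div_mem E)
  have hed : e ≤ (div : α) := inf_le_right
  have memR : ∀ w, w ∈ R ↔ ∃ v ∈ Jel b m, Cyc cov (some (x, i)) v w := by
    intro w
    constructor
    · rintro ⟨u, rfl, v, hv, hc⟩
      exact ⟨v, hv, hc⟩
    · rintro ⟨v, hv, hc⟩
      exact ⟨_, rfl, v, hv, hc⟩
  have high : ∀ (z : DAt α) (k : ℕ), m ≤ k → (some (z, k) ∈ R ↔ z.1 ≤ e) := by
    intro z k hk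
    rw [memR]
    constructor
    · rintro ⟨v, hv, hc⟩
      rcases v with _ | ⟨y, j⟩
      · exact absurd hv (none_not_mem_Jel hint hb.2)
      · obtain ⟨hyb, hj⟩ := some_mem_Jel.mp hv
        rw [cyc_ss_some] at hc
        obtain ⟨h1, -⟩ := hc
        have hcy : cov y.1 = b := covEq hcov y.2.1 hb.1 hyb
        by_cases hcase : cov x.1 = b ∧ cov z.1 = b
        · have hy' : y.1 ≤ comp x.1 z.1 := trans_pl hsym y.2.1 z.2.1 h1
          have h5 : comp x.1 z.1 ≤ comp b b :=
            comp_mono (hcase.1 ▸ le_cov hcov x.2.1) (hcase.2 ▸ le_cov hcov z.2.1)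
          have h6 : b ⊓ comp b b ≠ ⊥ := fun h0 =>
            y.2.1.1 (le_bot_iff.mp (h0 ▸ le_inf hyb (hy'.trans h5)))
          have hbb : b ≤ comp b b := aon hb.1 (E.comp_mem _ hb.1.1 _ hb.1.1) h6
          refine le_inf ?_ z.2.2
          rw [he] at *
          rw [hcase.1]
          exact (hcase.2 ▸ le_cov hcov z.2.1).trans hbb
        · have hne : ¬ (cov x.1 = cov y.1 ∧ cov y.1 = cov z.1) := by
            rintro ⟨hA, hB⟩
            rw [hcy] at hA hB
            exact hcase ⟨hA, hB.symm⟩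
          have h7 := (cross hint hcov hspec x.2.1 y.2.1 z.2.1 x.2.2 y.2.2
            z.2.2 hne).mp h1
          rw [hcy] at h7
          exact le_inf ((le_cov hcov z.2.1).trans h7) z.2.2
    · intro hz
      have hzc : cov z.1 ≤ comp (cov x.1) b :=
        covLe hcov z.2.1 hcompE (hz.trans inf_le_left)
      by_cases hcase : cov x.1 = b ∧ cov z.1 = b
      · have hbb : b ≤ comp b b := by
          have := hcase.2 ▸ hzc
          rwa [hcase.1] at this
        have hzb : z.1 ≤ b := hcase.2 ▸ le_cov hcov z.2.1
        have hxb : x.1 ≤ b := hcase.1 ▸ le_cov hcov x.2.1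
        have h6 := hspec.2 b hb hbb x.1 z.1 x.2.1 z.2.1 hxb hzb
        obtain ⟨y0, hy0, hy0le⟩ := exists_atom_le h6
        have hy0b : y0 ≤ b := hy0le.trans inf_le_right
        have hy0c : y0 ≤ comp x.1 z.1 := hy0le.trans inf_le_left
        have hzxy : z.1 ≤ comp x.1 y0 := trans_pl hsym z.2.1 hy0 hy0c
        refine ⟨some (⟨y0, hy0, hy0b.trans hb.2⟩, k), some_mem_Jel.mpr ⟨hy0b, hk⟩, ?_⟩
        rw [cyc_ss_some]
        exact ⟨hzxy, fun _ => Or.inl ⟨by omega, rfl⟩⟩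
      · obtain ⟨y0, hy0, hy0b⟩ := exists_atom_le hb.1.2.1
        have hy0d : y0 ≤ (div : α) := hy0b.trans hb.2
        have hcy0 : cov y0 = b := covEq hcov hy0 hb.1 hy0b
        have hne : ¬ (cov x.1 = cov y0 ∧ cov y0 = cov z.1) := by
          rintro ⟨hA, hB⟩
          rw [hcy0] at hA hB
          exact hcase ⟨hA, hB.symm⟩
        have hzxy : z.1 ≤ comp x.1 y0 :=
          (cross hint hcov hspec x.2.1 hy0 z.2.1 x.2.2 hy0d z.2.2 hne).mpr
            (by rwa [hcy0])
        refine ⟨some (⟨y0, hy0, hy0d⟩, m), some_mem_Jel.mpr ⟨hy0b, le_rfl⟩, ?_⟩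
        rw [cyc_ss_some]
        exact ⟨hzxy, fun hcc => absurd hcc hne⟩
  rw [split_of_high hint R e hed m high]
  exact ⟨R ∩ lowAt α m, e, Set.inter_subset_right, heE, hed, rfl⟩

end Aux6

end NA

namespace NA

section Aux7

variable {α : Type} [RA α] [Fintype α] {E : Subalgebra α} {cov : α → α}

/-- Core 3: composition of a `Jel` atom with a singleton. -/
lemma Pf_core3 (hsym : Symmetric α) (hint : Integral α) (hcov : CoverMap E cov)
    (hspec : SpecialExt E) {m j : ℕ} (y : DAt α) (hj : j < m) {b : α}
    (hb : E.DivAtomOf b) : Pf E m (Ccomp cov (Jel b m) {some (y, j)}) := by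
  classical
  set R := Ccomp cov (Jel b m) ({some (y, j)} : Set (CAtom α)) with hR
  have hyE : cov y.1 ∈ E.carrier := (hcov y.1 y.2.1).1.1
  have hcompE : comp b (cov y.1) ∈ E.carrier := E.comp_mem _ hb.1.1 _ hyE
  set e : α := comp b (cov y.1) ⊓ div with he
  have heE : e ∈ E.carrier := E.inf_mem hcompE (div_mem E)
  have hed : e ≤ (div : α) := inf_le_right
  have memR : ∀ w, w ∈ R ↔ ∃ u ∈ Jel b m, Cyc cov u (some (y, j)) w := by
    intro w
    constructor
    · rintro ⟨u, hu, v, rfl, hc⟩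
      exact ⟨u, hu, hc⟩
    · rintro ⟨u, hu, hc⟩
      exact ⟨u, hu, _, rfl, hc⟩
  have high : ∀ (z : DAt α) (k : ℕ), m ≤ k → (some (z, k) ∈ R ↔ z.1 ≤ e) := by
    intro z k hk
    rw [memR]
    constructor
    · rintro ⟨u, hu, hc⟩
      rcases u with _ | ⟨x, i⟩
      · exact absurd hu (none_not_mem_Jel hint hb.2)
      · obtain ⟨hxb, hi⟩ := some_mem_Jel.mp hu
        rw [cyc_ss_some] at hc
        obtain ⟨h1, -⟩ := hc
        have hcx : cov x.1 = b := covEq hcov x.2.1 hb.1 hxb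
        by_cases hcase : cov y.1 = b ∧ cov z.1 = b
        · have hx' : x.1 ≤ comp z.1 y.1 := trans_pr hsym x.2.1 z.2.1 h1
          have h5 : comp z.1 y.1 ≤ comp b b :=
            comp_mono (hcase.2 ▸ le_cov hcov z.2.1) (hcase.1 ▸ le_cov hcov y.2.1)
          have h6 : b ⊓ comp b b ≠ ⊥ := fun h0 =>
            x.2.1.1 (le_bot_iff.mp (h0 ▸ le_inf hxb (hx'.trans h5)))
          have hbb : b ≤ comp b b := aon hb.1 (E.comp_mem _ hb.1.1 _ hb.1.1) h6
          refine le_inf ?_ z.2.2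
          rw [hcase.1]
          exact (hcase.2 ▸ le_cov hcov z.2.1).trans hbb
        · have hne : ¬ (cov x.1 = cov y.1 ∧ cov y.1 = cov z.1) := by
            rintro ⟨hA, hB⟩
            rw [hcx] at hA
            exact hcase ⟨hA.symm, (hA ▸ hB : b = cov z.1).symm⟩
          have h7 := (cross hint hcov hspec x.2.1 y.2.1 z.2.1 x.2.2 y.2.2
            z.2.2 hne).mp h1
          rw [hcx] at h7
          exact le_inf ((le_cov hcov z.2.1).trans h7) z.2.2
    · intro hz
      have hzc : cov z.1 ≤ comp b (cov y.1) :=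
        covLe hcov z.2.1 hcompE (hz.trans inf_le_left)
      by_cases hcase : cov y.1 = b ∧ cov z.1 = b
      · have hbb : b ≤ comp b b := by
          have := hcase.2 ▸ hzc
          rwa [hcase.1] at this
        have hzb : z.1 ≤ b := hcase.2 ▸ le_cov hcov z.2.1
        have hyb : y.1 ≤ b := hcase.1 ▸ le_cov hcov y.2.1
        have h6 := hspec.2 b hb hbb z.1 y.1 z.2.1 y.2.1 hzb hyb
        obtain ⟨x0, hx0, hx0le⟩ := exists_atom_le h6
        have hx0b : x0 ≤ b := hx0le.trans inf_le_right
        have hx0c : x0 ≤ comp z.1 y.1 := hx0le.trans inf_le_left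
        have hzxy : z.1 ≤ comp x0 y.1 := trans_pr hsym z.2.1 hx0 hx0c
        refine ⟨some (⟨x0, hx0, hx0b.trans hb.2⟩, k), some_mem_Jel.mpr ⟨hx0b, hk⟩, ?_⟩
        rw [cyc_ss_some]
        exact ⟨hzxy, fun _ => Or.inr (Or.inl ⟨by omega, rfl⟩)⟩
      · obtain ⟨x0, hx0, hx0b⟩ := exists_atom_le hb.1.2.1
        have hx0d : x0 ≤ (div : α) := hx0b.trans hb.2
        have hcx0 : cov x0 = b := covEq hcov hx0 hb.1 hx0b
        have hne : ¬ (cov x0 = cov y.1 ∧ cov y.1 = cov z.1) := by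
          rintro ⟨hA, hB⟩
          rw [hcx0] at hA
          exact hcase ⟨hA.symm, (hA ▸ hB : b = cov z.1).symm⟩
        have hzxy : z.1 ≤ comp x0 y.1 :=
          (cross hint hcov hspec hx0 y.2.1 z.2.1 hx0d y.2.2 z.2.2 hne).mpr
            (by rwa [hcx0])
        refine ⟨some (⟨x0, hx0, hx0d⟩, m), some_mem_Jel.mpr ⟨hx0b, le_rfl⟩, ?_⟩
        rw [cyc_ss_some]
        exact ⟨hzxy, fun hcc => absurd hcc hne⟩
  rw [split_of_high hint R e hed m high]
  exact ⟨R ∩ lowAt α m, e, Set.inter_subset_right, heE, hed, rfl⟩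

/-- Core 4: composition of two `Jel` atoms. -/
lemma Pf_core4 (hsym : Symmetric α) (hint : Integral α) (hcov : CoverMap E cov)
    (hspec : SpecialExt E) {m : ℕ} {b b' : α} (hb : E.DivAtomOf b)
    (hb' : E.DivAtomOf b') : Pf E m (Ccomp cov (Jel b m) (Jel b' m)) := by
  classical
  set R := Ccomp cov (Jel b m) (Jel b' m) with hR
  have hcompE : comp b b' ∈ E.carrier := E.comp_mem _ hb.1.1 _ hb'.1.1
  set e : α := comp b b' ⊓ div with he
  have heE : e ∈ E.carrier := E.inf_mem hcompE (div_mem E)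
  have hed : e ≤ (div : α) := inf_le_right
  have high : ∀ (z : DAt α) (k : ℕ), m ≤ k → (some (z, k) ∈ R ↔ z.1 ≤ e) := by
    intro z k hk
    constructor
    · rintro ⟨u, hu, v, hv, hc⟩
      rcases u with _ | ⟨x, i⟩
      · exact absurd hu (none_not_mem_Jel hint hb.2)
      rcases v with _ | ⟨y, j⟩
      · exact absurd hv (none_not_mem_Jel hint hb'.2)
      obtain ⟨hxb, hi⟩ := some_mem_Jel.mp hu
      obtain ⟨hyb, hj⟩ := some_mem_Jel.mp hv
      rw [cyc_ss_some] at hc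
      obtain ⟨h1, -⟩ := hc
      have hcx : cov x.1 = b := covEq hcov x.2.1 hb.1 hxb
      have hcy : cov y.1 = b' := covEq hcov y.2.1 hb'.1 hyb
      by_cases hcase : b = b' ∧ cov z.1 = b
      · have hzb : z.1 ≤ b := hcase.2 ▸ le_cov hcov z.2.1
        have h5 : z.1 ≤ comp b b' := h1.trans (comp_mono hxb hyb)
        have h6 : b ⊓ comp b b' ≠ ⊥ := fun h0 =>
          z.2.1.1 (le_bot_iff.mp (h0 ▸ le_inf hzb h5))
        have hbb : b ≤ comp b b' := aon hb.1 hcompE h6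
        exact le_inf (hzb.trans hbb) z.2.2
      · have hne : ¬ (cov x.1 = cov y.1 ∧ cov y.1 = cov z.1) := by
          rintro ⟨hA, hB⟩
          rw [hcx] at hA
          rw [hcy] at hA hB
          exact hcase ⟨hA, (hA.trans hB).symm⟩
        have h7 := (cross hint hcov hspec x.2.1 y.2.1 z.2.1 x.2.2 y.2.2
          z.2.2 hne).mp h1
        rw [hcx, hcy] at h7
        exact le_inf ((le_cov hcov z.2.1).trans h7) z.2.2
    · intro hz
      have hzc : cov z.1 ≤ comp b b' :=
        covLe hcov z.2.1 hcompE (hz.trans inf_le_left)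
      by_cases hcase : b = b' ∧ cov z.1 = b
      · have hbb : b ≤ comp b b' := hcase.2 ▸ hzc
        have hzb : z.1 ≤ b := hcase.2 ▸ le_cov hcov z.2.1
        obtain ⟨x0, hx0, hx0b⟩ := exists_atom_le hb.1.2.1
        have hbb2 : b ≤ comp b b := by rw [← hcase.1] at hbb; exact hbb
        have h6 := hspec.2 b hb hbb2 x0 z.1 hx0 z.2.1 hx0b hzb
        obtain ⟨y0, hy0, hy0le⟩ := exists_atom_le h6
        have hy0b : y0 ≤ b := hy0le.trans inf_le_right
        have hy0c : y0 ≤ comp x0 z.1 := hy0le.trans inf_le_left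
        have hzxy : z.1 ≤ comp x0 y0 := trans_pl hsym z.2.1 hy0 hy0c
        refine ⟨some (⟨x0, hx0, hx0b.trans hb.2⟩, k), some_mem_Jel.mpr ⟨hx0b, hk⟩,
          some (⟨y0, hy0, (hy0b.trans hb.2 : y0 ≤ div)⟩, k),
          some_mem_Jel.mpr ⟨hcase.1 ▸ hy0b, hk⟩, ?_⟩
        rw [cyc_ss_some]
        exact ⟨hzxy, fun _ => Or.inl ⟨le_rfl, rfl⟩⟩
      · obtain ⟨x0, hx0, hx0b⟩ := exists_atom_le hb.1.2.1
        obtain ⟨y0, hy0, hy0b⟩ := exists_atom_le hb'.1.2.1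
        have hx0d : x0 ≤ (div : α) := hx0b.trans hb.2
        have hy0d : y0 ≤ (div : α) := hy0b.trans hb'.2
        have hcx0 : cov x0 = b := covEq hcov hx0 hb.1 hx0b
        have hcy0 : cov y0 = b' := covEq hcov hy0 hb'.1 hy0b
        have hne : ¬ (cov x0 = cov y0 ∧ cov y0 = cov z.1) := by
          rintro ⟨hA, hB⟩
          rw [hcx0] at hA
          rw [hcy0] at hA hB
          exact hcase ⟨hA, (hA.trans hB).symm⟩
        have hzxy : z.1 ≤ comp x0 y0 :=
          (cross hint hcov hspec hx0 hy0 z.2.1 hx0d hy0d z.2.2 hne).mpr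
            (by rwa [hcx0, hcy0])
        refine ⟨some (⟨x0, hx0, hx0d⟩, m), some_mem_Jel.mpr ⟨hx0b, le_rfl⟩,
          some (⟨y0, hy0, hy0d⟩, m), some_mem_Jel.mpr ⟨hy0b, le_rfl⟩, ?_⟩
        rw [cyc_ss_some]
        exact ⟨hzxy, fun hcc => absurd hcc hne⟩
  rw [split_of_high hint R e hed m high]
  exact ⟨R ∩ lowAt α m, e, Set.inter_subset_right, heE, hed, rfl⟩

end Aux7

end NA

namespace NA

section Aux8

variable {α : Type} [RA α] [Fintype α] {E : Subalgebra α} {cov : α → α}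

lemma Pf_Jel {m : ℕ} {b : α} (hb : E.DivAtomOf b) : Pf E m (Jel b m) :=
  ⟨∅, b, Set.empty_subset _, hb.1.1, hb.2, (Set.empty_union _).symm⟩

lemma Jel_atoms (hint : Integral α) (hcov : CoverMap E cov) {c : α}
    (hc : c ∈ E.carrier) (hcd : c ≤ (div : α)) (m : ℕ) :
    Jel c m = ⋃ a ∈ {a : α | E.DivAtomOf a ∧ a ≤ c}, Jel a m := by
  ext w
  rcases w with _ | ⟨z, k⟩
  · simp only [Set.mem_iUnion]
    constructor
    · intro h; exact absurd h (none_not_mem_Jel hint hcd)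
    · rintro ⟨a, ⟨ha, -⟩, h⟩
      exact absurd h (none_not_mem_Jel hint ha.2)
  · simp only [Set.mem_iUnion, some_mem_Jel]
    constructor
    · rintro ⟨hzc, hmk⟩
      exact ⟨cov z.1, ⟨covDiv hint hcov z.2.1 z.2.2, covLe hcov z.2.1 hc hzc⟩,
        le_cov hcov z.2.1, hmk⟩
    · rintro ⟨a, ⟨-, hac⟩, hza, hmk⟩
      exact ⟨hza.trans hac, hmk⟩

lemma Pf_comp (hsym : Symmetric α) (hint : Integral α) (hcov : CoverMap E cov)
    (hspec : SpecialExt E) {m : ℕ} {s t : Set (CAtom α)}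
    (hs : Pf E m s) (ht : Pf E m t) : Pf E m (Ccomp cov s t) := by
  obtain ⟨F, c, hF, hc, hcd, rfl⟩ := hs
  obtain ⟨G, d, hG, hd, hdd, rfl⟩ := ht
  have hFfin : F.Finite := (lowAt_finite m).subset hF
  have hGfin : G.Finite := (lowAt_finite m).subset hG
  have hSc : {a : α | E.DivAtomOf a ∧ a ≤ c}.Finite := Set.toFinite _
  have hSd : {a : α | E.DivAtomOf a ∧ a ≤ d}.Finite := Set.toFinite _
  have hss : ∀ u ∈ lowAt α m, ∀ v ∈ lowAt α m, Pf E m (Ccomp cov {u} {v}) := by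
    rintro u hu v hv
    rcases u with _ | ⟨x, i⟩
    · rw [Ccomp_none_left]; exact Pf_single hint E hv
    rcases v with _ | ⟨y, j⟩
    · rw [Ccomp_none_right]; exact Pf_single hint E hu
    exact Pf_core1 hsym hint hcov hspec x y (some_mem_lowAt.mp hu)
      (some_mem_lowAt.mp hv)
  have hsJ : ∀ u ∈ lowAt α m, ∀ a : α, E.DivAtomOf a →
      Pf E m (Ccomp cov {u} (Jel a m)) := by
    rintro u hu a ha
    rcases u with _ | ⟨x, i⟩
    · rw [Ccomp_none_left]; exact Pf_Jel ha
    · exact Pf_core2 hsym hint hcov hspec x (some_mem_lowAt.mp hu) ha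
  have hJs : ∀ a : α, E.DivAtomOf a → ∀ v ∈ lowAt α m,
      Pf E m (Ccomp cov (Jel a m) {v}) := by
    rintro a ha v hv
    rcases v with _ | ⟨y, j⟩
    · rw [Ccomp_none_right]; exact Pf_Jel ha
    · exact Pf_core3 hsym hint hcov hspec y (some_mem_lowAt.mp hv) ha
  have h1 : Pf E m (Ccomp cov F G) := by
    rw [← Set.biUnion_of_singleton F, Ccomp_biUnion_left]
    refine Pf_biUnion hint hFfin fun u hu => ?_
    rw [← Set.biUnion_of_singleton G, Ccomp_biUnion_right]
    exact Pf_biUnion hint hGfin fun v hv => hss u (hF hu) v (hG hv)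
  have h2 : Pf E m (Ccomp cov F (Jel d m)) := by
    rw [← Set.biUnion_of_singleton F, Ccomp_biUnion_left]
    refine Pf_biUnion hint hFfin fun u hu => ?_
    rw [Jel_atoms hint hcov hd hdd m, Ccomp_biUnion_right]
    exact Pf_biUnion hint hSd fun a ha => hsJ u (hF hu) a ha.1
  have h3 : Pf E m (Ccomp cov (Jel c m) G) := by
    rw [← Set.biUnion_of_singleton G, Ccomp_biUnion_right]
    refine Pf_biUnion hint hGfin fun v hv => ?_
    rw [Jel_atoms hint hcov hc hcd m, Ccomp_biUnion_left]
    exact Pf_biUnion hint hSc fun a ha => hJs a ha.1 v (hG hv)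
  have h4 : Pf E m (Ccomp cov (Jel c m) (Jel d m)) := by
    rw [Jel_atoms hint hcov hc hcd m, Ccomp_biUnion_left]
    refine Pf_biUnion hint hSc fun a ha => ?_
    rw [Jel_atoms hint hcov hd hdd m, Ccomp_biUnion_right]
    refine Pf_biUnion hint hSd fun a' ha' =>
      Pf_core4 hsym hint hcov hspec ha.1 ha'.1
  rw [Ccomp_union_left, Ccomp_union_right, Ccomp_union_right]
  exact Pf_sup hint (Pf_sup hint h1 h2) (Pf_sup hint h3 h4)

end Aux8

end NA

namespace NA

section Aux9

variable {α : Type} [RA α] [Fintype α] {E : Subalgebra α} {cov : α → α}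

lemma genFrom_P (hsym : Symmetric α) (hint : Integral α) (hcov : CoverMap E cov)
    (hspec : SpecialExt E) {G : Set (Set (CAtom α))} {N : ℕ}
    (hbase : ∀ s ∈ G, Pf E N s) : ∀ t, GenFrom cov G t → Pf E N t := by
  intro t h
  induction h with
  | base hs => exact hbase _ hs
  | bot => exact Pf_empty hint E N
  | idel => exact Pf_single hint E (none_mem_lowAt N)
  | compl _ ih => exact Pf_compl hint ih
  | sup _ _ ih1 ih2 => exact Pf_sup hint ih1 ih2
  | cmp _ _ ih1 ih2 => exact Pf_comp hsym hint hcov hspec ih1 ih2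

lemma gen_P (hsym : Symmetric α) (hint : Integral α) (hcov : CoverMap E cov)
    (hspec : SpecialExt E) : ∀ s, Gen cov s → ∃ m, Pf E m s := by
  intro s h
  induction h with
  | base hs =>
    obtain ⟨w, rfl⟩ := hs
    rcases w with _ | ⟨z, i⟩
    · exact ⟨0, Pf_single hint E (none_mem_lowAt 0)⟩
    · exact ⟨i + 1, Pf_single hint E (some_mem_lowAt.mpr (by omega))⟩
  | bot => exact ⟨0, Pf_empty hint E 0⟩
  | idel => exact ⟨0, Pf_single hint E (none_mem_lowAt 0)⟩
  | compl _ ih =>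
    obtain ⟨m, hm⟩ := ih
    exact ⟨m, Pf_compl hint hm⟩
  | sup _ _ ih1 ih2 =>
    obtain ⟨m1, h1⟩ := ih1
    obtain ⟨m2, h2⟩ := ih2
    exact ⟨max m1 m2, Pf_sup hint (Pf_mono hint (le_max_left _ _) h1)
      (Pf_mono hint (le_max_right _ _) h2)⟩
  | cmp _ _ ih1 ih2 =>
    obtain ⟨m1, h1⟩ := ih1
    obtain ⟨m2, h2⟩ := ih2
    exact ⟨max m1 m2, Pf_comp hsym hint hcov hspec
      (Pf_mono hint (le_max_left _ _) h1) (Pf_mono hint (le_max_right _ _) h2)⟩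

lemma Pf_almost (hint : Integral α) {m : ℕ} {s : Set (CAtom α)}
    (h : Pf E m s) : ∃ a ∈ E.carrier, (symmDiff s (Jel a 0)).Finite := by
  obtain ⟨F, c, hF, hc, hcd, rfl⟩ := h
  refine ⟨c, hc, ?_⟩
  have hdrop : Jel c 0 = (Jel c 0 ∩ lowAt α m) ∪ Jel c m :=
    Jel_drop hint hcd (Nat.zero_le m)
  have hsub : symmDiff (F ∪ Jel c m) (Jel c 0) ⊆ F ∪ (Jel c 0 ∩ lowAt α m) := by
    intro w hw
    rw [Set.mem_symmDiff, hdrop] at hw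
    rcases hw with ⟨h1, h2⟩ | ⟨h1, h2⟩
    · rcases h1 with h1 | h1
      · exact Or.inl h1
      · exact absurd (Or.inr h1 : w ∈ (Jel c 0 ∩ lowAt α m) ∪ Jel c m) h2
    · rcases h1 with h1 | h1
      · exact Or.inr h1
      · exact absurd (Or.inr h1 : w ∈ F ∪ Jel c m) h2
  exact (Set.Finite.union ((lowAt_finite m).subset hF)
    ((lowAt_finite m).subset Set.inter_subset_right)).subset hsub

lemma exists_uniform (hint : Integral α) (G : Set (Set (CAtom α)))
    (hGfin : G.Finite) (h : ∀ s ∈ G, ∃ m, Pf E m s) :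
    ∃ N, ∀ s ∈ G, Pf E N s := by
  revert h
  induction G, hGfin using Set.Finite.induction_on with
  | empty => exact fun _ => ⟨0, fun s hs => absurd hs (Set.notMem_empty s)⟩
  | @insert a S ha hS ih =>
    intro h
    obtain ⟨N1, hN1⟩ := ih fun s hs => h s (Set.mem_insert_of_mem _ hs)
    obtain ⟨m, hm⟩ := h a (Set.mem_insert _ _)
    refine ⟨max m N1, ?_⟩
    rintro s (rfl | hs)
    · exact Pf_mono hint (le_max_left _ _) hm
    · exact Pf_mono hint (le_max_right _ _) (hN1 s hs)

lemma Pf_class_finite (N : ℕ) : {t : Set (CAtom α) | Pf E N t}.Finite := by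
  have hsub : {t : Set (CAtom α) | Pf E N t} ⊆
      Set.image2 (fun (F : Set (CAtom α)) (c : α) => F ∪ Jel c N)
        {F : Set (CAtom α) | F ⊆ lowAt α N} (Set.univ : Set α) := by
    rintro t ⟨F, c, hF, -, -, rfl⟩
    exact Set.mem_image2_of_mem hF (Set.mem_univ c)
  exact (Set.Finite.image2 _ ((lowAt_finite N).finite_subsets)
    Set.finite_univ).subset hsub

end Aux9

end NA

/-- If A is a special extension of E and B is the subalgebra of
C_E(A) generated by its atoms, then every finitely generated subalgebra of B is
finite, and every element of B differs from an element of the canonical copy of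
E (via a ↦ J(a,0)) by a join of finitely many atoms. -/
theorem stmt9 {α : Type} [RA α] [Fintype α]
    (hsym : NA.Symmetric α) (hint : NA.Integral α)
    (E : NA.Subalgebra α) (cov : α → α) (hcov : NA.CoverMap E cov)
    (hspec : NA.SpecialExt E) :
    (∀ G : Set (Set (NA.CAtom α)), G.Finite → (∀ s ∈ G, NA.Gen cov s) →
      {t | NA.GenFrom cov G t}.Finite) ∧
    (∀ s : Set (NA.CAtom α), NA.Gen cov s →
      ∃ a ∈ E.carrier, (symmDiff s (NA.Jel a 0)).Finite) := by
  constructor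
  · intro G hGfin hGgen
    obtain ⟨N, hN⟩ := NA.exists_uniform hint G hGfin
      (fun s hs => NA.gen_P hsym hint hcov hspec s (hGgen s hs))
    have hsub : {t | NA.GenFrom cov G t} ⊆ {t : Set (NA.CAtom α) | NA.Pf E N t} :=
      fun t ht => NA.genFrom_P hsym hint hcov hspec hN t ht
    exact (NA.Pf_class_finite N).subset hsub
  · intro s hs
    obtain ⟨m, hm⟩ := NA.gen_P hsym hint hcov hspec s hs
    exact NA.Pf_almost hint hm
end

section
/- Every atomic symmetric integral relation algebra containing a flexible trio has the 1-point extension property. -/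
universe u v

section Aux

open NA

variable {α : Type} [NA α]

lemma aux_inf_iff (hsym : NA.Symmetric α) (u v z : α) :
    NA.comp u v ⊓ z = ⊥ ↔ NA.comp v u ⊓ z = ⊥ := by
  have h1 := NA.peirce1 u v z
  have h2 := NA.peirce2 u z v
  have h3 := NA.peirce1 v z u
  have hs : ∀ x : α, NA.conv x = x := hsym
  simp only [hs] at h1 h2 h3
  exact h1.trans (h2.trans h3)

lemma aux_comm (hsym : NA.Symmetric α) (u v : α) :
    NA.comp u v = NA.comp v u := by
  have key : ∀ p q : α, NA.comp p q ≤ NA.comp q p := by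
    intro p q
    rw [← sdiff_eq_bot_iff, sdiff_eq]
    rw [aux_inf_iff hsym p q]
    rw [← sdiff_eq, sdiff_eq_bot_iff]
  exact le_antisymm (key u v) (key v u)

lemma aux_atom_le (r s : α) (hr : IsAtom r) (h : r ⊓ s ≠ ⊥) : r ≤ s := by
  rcases lt_or_eq_of_le (inf_le_left : r ⊓ s ≤ r) with h3 | h3
  · exact absurd (hr.2 _ h3) h
  · exact inf_eq_left.mp h3

lemma aux_rotate (hsym : NA.Symmetric α) (p q r : α)
    (hq : IsAtom q) (hr : IsAtom r) (h : r ≤ NA.comp p q) :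
    q ≤ NA.comp p r := by
  apply aux_atom_le _ _ hq
  intro hbot
  have h1 : NA.comp p r ⊓ q = ⊥ := by rwa [inf_comm] at hbot
  have h2 := (NA.peirce1 p r q).mp h1
  rw [hsym p] at h2
  have h3 : r ⊓ NA.comp p q = r := inf_eq_left.mpr h
  rw [inf_comm] at h3
  rw [h3] at h2
  exact hr.1 h2

lemma aux_ne_ide_le_div (hint : NA.Integral α) (q : α) (hq : IsAtom q)
    (hne : q ≠ NA.ide) : q ≤ (NA.div : α) := by
  have hqi : q ⊓ NA.ide = ⊥ := by
    rcases lt_or_eq_of_le (inf_le_right : q ⊓ NA.ide ≤ NA.ide) with h3 | h3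
    · exact hint.2 _ h3
    · exfalso
      have hle : NA.ide ≤ q := h3 ▸ inf_le_left
      rcases lt_or_eq_of_le hle with h4 | h4
      · exact hint.1 (hq.2 _ h4 ▸ rfl)
      · exact hne h4.symm
  have : Disjoint q NA.ide := disjoint_iff.mpr hqi
  exact this.le_compl_right

lemma aux_divatom_ne_ide (x : α) (hx : NA.DivAtom x) : x ≠ NA.ide := by
  intro h
  have h2 : x ≤ xᶜ := by
    have := hx.2
    rw [NA.div, ← h] at this
    exact this
  have : x = ⊥ := by
    have := le_inf le_rfl h2
    rwa [inf_compl_eq_bot, le_bot_iff] at this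
  exact hx.1.1 this

lemma aux_ide_le_comp_self (hsym : NA.Symmetric α) (hint : NA.Integral α)
    (z : α) (hz : IsAtom z) : NA.ide ≤ NA.comp z z := by
  apply aux_atom_le _ _ hint
  intro hbot
  rw [inf_comm] at hbot
  have h2 := (NA.peirce1 z z NA.ide).mp hbot
  rw [hsym z, NA.comp_ide, inf_idem] at h2
  exact hz.1 h2

/-- The extension matrix. -/
def extM {k : ℕ} (μ : Fin k → Fin k → α) (z : Fin k → α) :
    Fin (k + 1) → Fin (k + 1) → α := fun l m =>
  Fin.lastCases (Fin.lastCases NA.ide z m)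
    (fun l' => Fin.lastCases (z l') (fun m' => μ l' m') m) l

@[simp] lemma extM_last_last {k : ℕ} (μ : Fin k → Fin k → α) (z : Fin k → α) :
    extM μ z (Fin.last k) (Fin.last k) = NA.ide := by
  simp [extM]

@[simp] lemma extM_cast_last {k : ℕ} (μ : Fin k → Fin k → α) (z : Fin k → α)
    (l : Fin k) : extM μ z l.castSucc (Fin.last k) = z l := by
  simp [extM]

@[simp] lemma extM_last_cast {k : ℕ} (μ : Fin k → Fin k → α) (z : Fin k → α)
    (m : Fin k) : extM μ z (Fin.last k) m.castSucc = z m := by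
  simp [extM]

@[simp] lemma extM_cast_cast {k : ℕ} (μ : Fin k → Fin k → α) (z : Fin k → α)
    (l m : Fin k) : extM μ z l.castSucc m.castSucc = μ l m := by
  simp [extM]

end Aux

/-- Every atomic symmetric integral relation algebra containing a
flexible trio has the 1-point extension property. -/
theorem stmt11 {α : Type} [RA α] (hat : IsAtomic α)
    (hsym : NA.Symmetric α) (hint : NA.Integral α)
    (a b c : α) (htrio : NA.FlexTrio a b c) :
    NA.OnePointExt α := by
  intro k μ hbm hid x y hx hy i j hij hle
  obtain ⟨hatoms, hdiag, hconv, htri⟩ := hbm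
  obtain ⟨ha, hb, hc, hab, hac, hbc, haa, hbb, hcc, hab2, hac2, hbc2, hmax⟩ := htrio
  have hμsym : ∀ l m, μ l m = μ m l := by
    intro l m
    rw [← hconv l m, hsym]
  have hgood : ∀ u v : α, NA.comp u v = (NA.div : α) → (NA.div : α) ≤ NA.comp v u := by
    intro u v h
    rw [aux_comm hsym v u, h]
  have two : ∀ u : α, NA.DivAtom u →
      ((NA.div : α) ≤ NA.comp a u ∧ (NA.div : α) ≤ NA.comp b u) ∨
      ((NA.div : α) ≤ NA.comp a u ∧ (NA.div : α) ≤ NA.comp c u) ∨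
      ((NA.div : α) ≤ NA.comp b u ∧ (NA.div : α) ≤ NA.comp c u) := by
    intro u hu
    by_cases hua : u = a
    · subst hua
      exact Or.inl ⟨(by rw [haa]; exact le_top), hgood u b hab2⟩
    by_cases hub : u = b
    · subst hub
      exact Or.inl ⟨le_of_eq hab2.symm, (by rw [hbb]; exact le_top)⟩
    by_cases huc : u = c
    · subst huc
      exact Or.inl ⟨le_of_eq hac2.symm, le_of_eq hbc2.symm⟩
    · have hune : u ≠ NA.ide := aux_divatom_ne_ide u hu
      have hmem : u ∉ ({(NA.ide : α), a, b, c} : Set α) := by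
        simp only [Set.mem_insert_iff, Set.mem_singleton_iff]
        tauto
      rcases hmax u hu.1 hmem with ⟨h1, h2⟩ | ⟨h1, h2⟩ | ⟨h1, h2⟩
      · exact Or.inl ⟨hgood u a h1, hgood u b h2⟩
      · exact Or.inr (Or.inl ⟨hgood u a h1, hgood u c h2⟩)
      · exact Or.inr (Or.inr ⟨hgood u b h1, hgood u c h2⟩)
  obtain ⟨w, hwdiv, hww, hwx, hwy⟩ : ∃ w : α, NA.DivAtom w ∧ NA.comp w w = ⊤ ∧
      (NA.div : α) ≤ NA.comp w x ∧ (NA.div : α) ≤ NA.comp w y := by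
    rcases two x hx with ⟨h1, h2⟩ | ⟨h1, h2⟩ | ⟨h1, h2⟩ <;>
      rcases two y hy with ⟨h1', h2'⟩ | ⟨h1', h2'⟩ | ⟨h1', h2'⟩ <;>
      first
        | exact ⟨a, ha, haa, h1, h1'⟩
        | exact ⟨b, hb, hbb, h2, h2'⟩
        | exact ⟨b, hb, hbb, h2, h1'⟩
        | exact ⟨b, hb, hbb, h1, h2'⟩
        | exact ⟨b, hb, hbb, h1, h1'⟩
        | exact ⟨c, hc, hcc, h2, h2'⟩
        | exact ⟨c, hc, hcc, h2, h1'⟩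
        | exact ⟨c, hc, hcc, h1, h2'⟩
  have hji : j ≠ i := Ne.symm hij
  set z : Fin k → α := fun l => if l = i then x else if l = j then y else w with hzdef
  have hzi : z i = x := by simp [hzdef]
  have hzj : z j = y := by simp [hzdef, hji]
  have hzo : ∀ l, l ≠ i → l ≠ j → z l = w := by
    intro l h1 h2; simp [hzdef, h1, h2]
  have hzdiv : ∀ l, NA.DivAtom (z l) := by
    intro l
    rw [hzdef]
    dsimp only
    split_ifs
    exacts [hx, hy, hwdiv]
  have hzatom : ∀ l, IsAtom (z l) := fun l => (hzdiv l).1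
  have hzne : ∀ l, z l ≠ NA.ide := fun l => aux_divatom_ne_ide _ (hzdiv l)
  have hK : ∀ l m : Fin k, μ l m ≤ NA.comp (z l) (z m) := by
    intro l m
    by_cases hlm : l = m
    · subst hlm
      rw [(hid l l).mpr rfl]
      exact aux_ide_le_comp_self hsym hint _ (hzatom l)
    · have hmdiv : μ l m ≤ (NA.div : α) :=
        aux_ne_ide_le_div hint _ (hatoms l m) (fun h => hlm ((hid l m).mp h))
      by_cases hli : l = i
      · by_cases hmj : m = j
        · subst hli; subst hmj
          rw [hzi, hzj]; exact hle
        · have hmi : m ≠ i := fun h => hlm (hli.trans h.symm)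
          subst hli
          rw [hzi, hzo m hmi hmj, aux_comm hsym x w]
          exact hmdiv.trans hwx
      · by_cases hlj : l = j
        · by_cases hmi : m = i
          · subst hlj; subst hmi
            rw [hzj, hzi, aux_comm hsym y x, hμsym]
            exact hle
          · have hmj : m ≠ j := fun h => hlm (hlj.trans h.symm)
            subst hlj
            rw [hzj, hzo m hmi hmj, aux_comm hsym y w]
            exact hmdiv.trans hwy
        · rw [hzo l hli hlj]
          by_cases hmi : m = i
          · subst hmi; rw [hzi]; exact hmdiv.trans hwx
          · by_cases hmj : m = j
            · subst hmj; rw [hzj]; exact hmdiv.trans hwy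
            · rw [hzo m hmi hmj, hww]; exact le_top
  refine ⟨extM μ z, ⟨?_, ?_, ?_, ?_⟩, ?_, ?_, ?_, ?_⟩
  · intro p q
    induction p using Fin.lastCases with
    | last =>
      induction q using Fin.lastCases with
      | last => simpa using (show IsAtom (NA.ide : α) from hint)
      | cast q => simpa using hzatom q
    | cast p =>
      induction q using Fin.lastCases with
      | last => simpa using hzatom p
      | cast q => simpa using hatoms p q
  · intro p
    induction p using Fin.lastCases with
    | last => simp
    | cast p => simpa using hdiag p
  · intro p q
    rw [hsym]
    induction p using Fin.lastCases with
    | last =>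
      induction q using Fin.lastCases with
      | last => rfl
      | cast q => simp
    | cast p =>
      induction q using Fin.lastCases with
      | last => simp
      | cast q => simpa using hμsym p q
  · intro p q r
    induction p using Fin.lastCases with
    | last =>
      induction q using Fin.lastCases with
      | last =>
        induction r using Fin.lastCases with
        | last => simpa using le_of_eq (NA.comp_ide (NA.ide : α)).symm
        | cast r => simpa using aux_ide_le_comp_self hsym hint _ (hzatom r)
      | cast q =>
        induction r using Fin.lastCases with
        | last => simpa using le_of_eq (NA.ide_comp (z q)).symm
        | cast r => simpa using aux_rotate hsym (z r) (z q) (μ r q) (hzatom q) (hatoms r q) (hK r q)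
    | cast p =>
      induction q using Fin.lastCases with
      | last =>
        induction r using Fin.lastCases with
        | last => simpa using le_of_eq (NA.comp_ide (z p)).symm
        | cast r =>
          simp only [extM_cast_last, extM_cast_cast]
          have h1 : μ p r ≤ NA.comp (z r) (z p) := by
            rw [aux_comm hsym (z r) (z p)]; exact hK p r
          have h2 := aux_rotate hsym (z r) (z p) (μ p r) (hzatom p) (hatoms p r) h1
          rwa [aux_comm hsym (z r) (μ p r)] at h2
      | cast q =>
        induction r using Fin.lastCases with
        | last => simpa using hK p q
        | cast r => simpa using htri p q r
  · intro p q
    induction p using Fin.lastCases with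
    | last =>
      induction q using Fin.lastCases with
      | last => simp
      | cast q =>
        simp only [extM_last_cast]
        constructor
        · intro h; exact absurd h (hzne q)
        · intro h; exact absurd h (Ne.symm (ne_of_lt (Fin.castSucc_lt_last q)))
    | cast p =>
      induction q using Fin.lastCases with
      | last =>
        simp only [extM_cast_last]
        constructor
        · intro h; exact absurd h (hzne p)
        · intro h; exact absurd h (ne_of_lt (Fin.castSucc_lt_last p))
      | cast q =>
        simp only [extM_cast_cast]
        rw [Fin.castSucc_inj]
        exact hid p q
  · intro l m
    simp
  · simp [hzi]
  · simp [hzj]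
end

section
/- There exists a symmetric integral relation algebra with seven atoms 1', a, b, c, d, e, f, whose diversity cycles are all cycles on {a,b,c,d,e,f} except [a,d,d], [b,e,e], and [c,f,f], such that a, b, c form a flexible trio but no atom of the algebra is flexible. -/
universe u v

namespace Stmt17

def cyc (i j k : ℕ) : Bool :=
  if i = 0 then j == k else if j = 0 then i == k else if k = 0 then i == j
  else ! ((i == 1 && j == 4 && k == 4) || (i == 4 && j == 1 && k == 4) || (i == 4 && j == 4 && k == 1)
       || (i == 2 && j == 5 && k == 5) || (i == 5 && j == 2 && k == 5) || (i == 5 && j == 5 && k == 2)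
       || (i == 3 && j == 6 && k == 6) || (i == 6 && j == 3 && k == 6) || (i == 6 && j == 6 && k == 3))

abbrev A := Finset (Fin 7)

def comp7 (X Y : A) : A :=
  Finset.univ.filter (fun k => ∃ i ∈ X, ∃ j ∈ Y, cyc i.1 j.1 k.1 = true)

lemma mem_comp7 {X Y : A} {k : Fin 7} :
    k ∈ comp7 X Y ↔ ∃ i ∈ X, ∃ j ∈ Y, cyc i.1 j.1 k.1 = true := by
  simp [comp7]

lemma cyc_swap23 : ∀ i j k : Fin 7, cyc i.1 j.1 k.1 = cyc i.1 k.1 j.1 := by decide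
lemma cyc_swap13 : ∀ i j k : Fin 7, cyc i.1 j.1 k.1 = cyc k.1 j.1 i.1 := by decide
lemma cyc_id_right : ∀ i k : Fin 7, cyc i.1 0 k.1 = true ↔ i = k := by decide
lemma cyc_id_left : ∀ j k : Fin 7, cyc 0 j.1 k.1 = true ↔ j = k := by decide
lemma cyc_assoc : ∀ i j n k : Fin 7,
    ((∃ m : Fin 7, cyc i.1 j.1 m.1 = true ∧ cyc m.1 n.1 k.1 = true) ↔
     (∃ m : Fin 7, cyc j.1 n.1 m.1 = true ∧ cyc i.1 m.1 k.1 = true)) := by decide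

lemma key (X Y Z : A) :
    comp7 X Y ⊓ Z = ⊥ ↔ ∀ i ∈ X, ∀ j ∈ Y, ∀ k ∈ Z, ¬ (cyc i.1 j.1 k.1 = true) := by
  constructor
  · intro h i hi j hj k hk hc
    have : k ∈ comp7 X Y ⊓ Z := by
      rw [Finset.inf_eq_inter, Finset.mem_inter]
      exact ⟨mem_comp7.2 ⟨i, hi, j, hj, hc⟩, hk⟩
    rw [h] at this; exact absurd this (Finset.notMem_empty k)
  · intro h
    rw [Finset.bot_eq_empty, Finset.eq_empty_iff_forall_notMem]
    intro k hk
    rw [Finset.inf_eq_inter, Finset.mem_inter, mem_comp7] at hk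
    obtain ⟨⟨i, hi, j, hj, hc⟩, hkZ⟩ := hk
    exact h i hi j hj k hkZ hc

instance instNA : NA A where
  comp := comp7
  conv := id
  ide := {0}
  comp_ide X := by
    ext k
    rw [mem_comp7]
    constructor
    · rintro ⟨i, hi, j, hj, hc⟩
      rw [Finset.mem_singleton] at hj; subst hj
      rwa [(cyc_id_right i k).1 hc] at hi
    · intro hk
      exact ⟨k, hk, 0, Finset.mem_singleton_self 0, (cyc_id_right k k).2 rfl⟩
  ide_comp X := by
    ext k
    rw [mem_comp7]
    constructor
    · rintro ⟨i, hi, j, hj, hc⟩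
      rw [Finset.mem_singleton] at hi; subst hi
      rwa [(cyc_id_left j k).1 hc] at hj
    · intro hk
      exact ⟨0, Finset.mem_singleton_self 0, k, hk, (cyc_id_left k k).2 rfl⟩
  conv_conv _ := rfl
  conv_sup _ _ := rfl
  comp_sup X Y Z := by
    ext k
    simp only [mem_comp7, Finset.sup_eq_union, Finset.mem_union]
    constructor
    · rintro ⟨i, hi, j, hj | hj, hc⟩
      · exact Or.inl ⟨i, hi, j, hj, hc⟩
      · exact Or.inr ⟨i, hi, j, hj, hc⟩
    · rintro (⟨i, hi, j, hj, hc⟩ | ⟨i, hi, j, hj, hc⟩)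
      · exact ⟨i, hi, j, Or.inl hj, hc⟩
      · exact ⟨i, hi, j, Or.inr hj, hc⟩
  sup_comp X Y Z := by
    ext k
    simp only [mem_comp7, Finset.sup_eq_union, Finset.mem_union]
    constructor
    · rintro ⟨i, hi | hi, j, hj, hc⟩
      · exact Or.inl ⟨i, hi, j, hj, hc⟩
      · exact Or.inr ⟨i, hi, j, hj, hc⟩
    · rintro (⟨i, hi, j, hj, hc⟩ | ⟨i, hi, j, hj, hc⟩)
      · exact ⟨i, Or.inl hi, j, hj, hc⟩
      · exact ⟨i, Or.inr hi, j, hj, hc⟩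
  peirce1 X Y Z := by
    rw [key, key]
    constructor
    · intro h i hi k hk j hj hc
      rw [cyc_swap23] at hc
      exact h i hi j hj k hk hc
    · intro h i hi j hj k hk hc
      rw [cyc_swap23] at hc
      exact h i hi k hk j hj hc
  peirce2 X Y Z := by
    rw [key, key]
    constructor
    · intro h k hk j hj i hi hc
      rw [cyc_swap13] at hc
      exact h i hi j hj k hk hc
    · intro h i hi j hj k hk hc
      rw [cyc_swap13] at hc
      exact h k hk j hj i hi hc

instance instRA : RA A where
  comp_assoc X Y Z := by
    show comp7 (comp7 X Y) Z = comp7 X (comp7 Y Z)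
    ext k
    simp only [mem_comp7]
    constructor
    · rintro ⟨m, ⟨i, hi, j, hj, h1⟩, n, hn, h2⟩
      obtain ⟨m', g1, g2⟩ := (cyc_assoc i j n k).1 ⟨m, h1, h2⟩
      exact ⟨i, hi, m', ⟨j, hj, n, hn, g1⟩, g2⟩
    · rintro ⟨i, hi, m, ⟨j, hj, n, hn, g1⟩, g2⟩
      obtain ⟨m', h1, h2⟩ := (cyc_assoc i j n k).2 ⟨m, g1, g2⟩
      exact ⟨m', ⟨i, hi, j, hj, h1⟩, n, hn, h2⟩

end Stmt17

/-- There exists a symmetric integral relation algebra with seven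
atoms 1', a, b, c, d, e, f whose diversity cycles are all cycles on
{a,b,c,d,e,f} except [a,d,d], [b,e,e], [c,f,f], such that a, b, c is a flexible
trio but no atom of the algebra is flexible. -/
theorem stmt17 :
    ∃ (α : Type) (inst : RA α),
      letI : RA α := inst
      ∃ a b c d e f : α,
        NA.Symmetric α ∧ NA.Integral α ∧
        List.Pairwise (· ≠ ·) [(NA.ide : α), a, b, c, d, e, f] ∧
        IsAtom a ∧ IsAtom b ∧ IsAtom c ∧ IsAtom d ∧ IsAtom e ∧ IsAtom f ∧
        (∀ x : α, IsAtom x → x = NA.ide ∨ x ∈ ({a, b, c, d, e, f} : Set α)) ∧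
        (∀ x y z : α, x ∈ ({a, b, c, d, e, f} : Set α) →
          y ∈ ({a, b, c, d, e, f} : Set α) →
          z ∈ ({a, b, c, d, e, f} : Set α) →
          (z ≤ NA.comp x y ↔
            ¬((x = a ∧ y = d ∧ z = d) ∨ (x = d ∧ y = a ∧ z = d) ∨
              (x = d ∧ y = d ∧ z = a) ∨
              (x = b ∧ y = e ∧ z = e) ∨ (x = e ∧ y = b ∧ z = e) ∨
              (x = e ∧ y = e ∧ z = b) ∨
              (x = c ∧ y = f ∧ z = f) ∨ (x = f ∧ y = c ∧ z = f) ∨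
              (x = f ∧ y = f ∧ z = c)))) ∧
        NA.FlexTrio a b c ∧ (∀ x : α, ¬ NA.Flexible x) := by
  refine ⟨Stmt17.A, Stmt17.instRA, {1}, {2}, {3}, {4}, {5}, {6},
    fun _ => rfl, Finset.isAtom_singleton 0, by decide,
    Finset.isAtom_singleton _, Finset.isAtom_singleton _, Finset.isAtom_singleton _,
    Finset.isAtom_singleton _, Finset.isAtom_singleton _, Finset.isAtom_singleton _,
    ?_, ?_, ?_, ?_⟩
  · intro x hx
    rw [Finset.isAtom_iff] at hx
    obtain ⟨i, rfl⟩ := hx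
    fin_cases i
    · exact Or.inl rfl
    · exact Or.inr (Or.inl rfl)
    · exact Or.inr (Or.inr (Or.inl rfl))
    · exact Or.inr (Or.inr (Or.inr (Or.inl rfl)))
    · exact Or.inr (Or.inr (Or.inr (Or.inr (Or.inl rfl))))
    · exact Or.inr (Or.inr (Or.inr (Or.inr (Or.inr (Or.inl rfl)))))
    · exact Or.inr (Or.inr (Or.inr (Or.inr (Or.inr (Or.inr rfl)))))
  · intro x y z hx hy hz
    simp only [Set.mem_insert_iff, Set.mem_singleton_iff] at hx hy hz
    rcases hx with rfl | rfl | rfl | rfl | rfl | rfl <;>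
      rcases hy with rfl | rfl | rfl | rfl | rfl | rfl <;>
      rcases hz with rfl | rfl | rfl | rfl | rfl | rfl <;> decide
  · refine ⟨⟨Finset.isAtom_singleton _, by decide⟩, ⟨Finset.isAtom_singleton _, by decide⟩,
      ⟨Finset.isAtom_singleton _, by decide⟩, by decide, by decide, by decide,
      by decide, by decide, by decide, by decide, by decide, by decide, ?_⟩
    intro x hx hnot
    rw [Finset.isAtom_iff] at hx
    obtain ⟨i, rfl⟩ := hx
    fin_cases i
    · exact absurd (Or.inl rfl) hnot
    · exact absurd (Or.inr (Or.inl rfl)) hnot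
    · exact absurd (Or.inr (Or.inr (Or.inl rfl))) hnot
    · exact absurd (Or.inr (Or.inr (Or.inr rfl))) hnot
    · exact Or.inr (Or.inr ⟨by decide, by decide⟩)
    · exact Or.inr (Or.inl ⟨by decide, by decide⟩)
    · exact Or.inl ⟨by decide, by decide⟩
  · intro x hf
    obtain ⟨⟨hatom, hdiv⟩, htop, hall⟩ := hf
    rw [Finset.isAtom_iff] at hatom
    obtain ⟨i, rfl⟩ := hatom
    fin_cases i
    · exact absurd hdiv (by decide)
    · exact absurd (hall {4} ⟨Finset.isAtom_singleton _, by decide⟩ (by decide)) (by decide)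
    · exact absurd (hall {5} ⟨Finset.isAtom_singleton _, by decide⟩ (by decide)) (by decide)
    · exact absurd (hall {6} ⟨Finset.isAtom_singleton _, by decide⟩ (by decide)) (by decide)
    · exact absurd htop (by decide)
    · exact absurd htop (by decide)
    · exact absurd htop (by decide)
end

section
/- Assume 4 ≤ r, A = E^{23}_{r+3} with atoms 1' = e_0, e_1, ..., e_{r+2}, E is the subalgebra of A with r atoms a_0 = 1', a_1 = e_1 + e_2, a_2 = e_3 + e_4, a_3 = e_5 + e_6, a_4 = e_7, ..., a_{r-1} = e_{r+2}. Then A is a special extension of E, and a_1, a_2, a_3 is a flexible trio of E. -/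
universe u v

/-- For 4 ≤ r and A = E^{23}_{r+3}, the subalgebra E with atoms
1', e₁+e₂, e₃+e₄, e₅+e₆, e₇, …, e_{r+2} makes A a special extension of E, and
a₁, a₂, a₃ is a flexible trio of E. -/
theorem stmt18 {α : Type} [RA α] [Fintype α] (r : ℕ) (hr : 4 ≤ r)
    (e : Fin (r + 3) → α) (hE23 : NA.IsE23 (r + 3) e)
    (aa : Fin r → α)
    (h0 : aa ⟨0, by omega⟩ = (NA.ide : α))
    (h1 : aa ⟨1, by omega⟩ = e ⟨1, by omega⟩ ⊔ e ⟨2, by omega⟩)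
    (h2 : aa ⟨2, by omega⟩ = e ⟨3, by omega⟩ ⊔ e ⟨4, by omega⟩)
    (h3 : aa ⟨3, by omega⟩ = e ⟨5, by omega⟩ ⊔ e ⟨6, by omega⟩)
    (hrest : ∀ i : Fin r, 4 ≤ (i : ℕ) →
      aa i = e ⟨(i : ℕ) + 3, Nat.add_lt_add_right i.isLt 3⟩)
    (E : NA.Subalgebra α)
    (hatoms : ∀ x : α, E.AtomOf x ↔ ∃ i : Fin r, x = aa i) :
    NA.SpecialExt E ∧
    NA.FlexTrioOf E (aa ⟨1, by omega⟩) (aa ⟨2, by omega⟩) (aa ⟨3, by omega⟩) := by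
  obtain ⟨hsym, hint, hinj, hide0, hatom, hcovA, hmul, hsq⟩ := hE23
  have atom_disj : ∀ x y : α, IsAtom x → IsAtom y → x ≠ y → x ⊓ y = ⊥ := by
    intro x y hx hy hxy
    rcases hx.le_iff.mp (inf_le_left : x ⊓ y ≤ x) with h | h
    · exact h
    · exfalso
      have hxle : x ≤ y := h ▸ inf_le_right
      rcases hy.le_iff.mp hxle with h' | h'
      · exact hx.1 h'
      · exact hxy h'
  have ne_e : ∀ i j : Fin (r + 3), (i : ℕ) ≠ (j : ℕ) → e i ≠ e j := by
    intro i j hij heq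
    exact hij (congrArg Fin.val (hinj heq))
  have edisj : ∀ i j : Fin (r + 3), (i : ℕ) ≠ (j : ℕ) → e i ⊓ e j = ⊥ :=
    fun i j h => atom_disj _ _ (hatom i) (hatom j) (ne_e i j h)
  have hm : ∀ i j : Fin (r + 3), (i : ℕ) ≠ 0 → (j : ℕ) ≠ 0 → (i : ℕ) ≠ (j : ℕ) →
      NA.comp (e i) (e j) = (NA.div : α) :=
    fun i j h1 h2 h3 => hmul i j h1 h2 (fun hh => h3 (congrArg Fin.val hh))
  have hideq : (NA.ide : α) = e ⟨0, by omega⟩ := (hide0 ⟨0, by omega⟩ rfl).symm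
  have atom_le_div : ∀ i : Fin (r + 3), (i : ℕ) ≠ 0 → e i ≤ (NA.div : α) := by
    intro i hi
    have hd : e i ⊓ NA.ide = ⊥ := by
      rw [hideq]; exact edisj i _ (by simpa using hi)
    exact le_compl_iff_disjoint_right.mpr (disjoint_iff.mpr hd)
  have div_ne_ide : ¬ ((NA.ide : α) ≤ NA.div) := by
    intro h
    exact hint.1 (disjoint_self.mp (le_compl_iff_disjoint_right.mp h))
  have atom_shape : ∀ x : α, IsAtom x → x ≤ (NA.div : α) →
      ∃ i : Fin (r + 3), (i : ℕ) ≠ 0 ∧ x = e i := by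
    intro x hx hxd
    obtain ⟨i, rfl⟩ := hcovA x hx
    refine ⟨i, fun h0' => ?_, rfl⟩
    rw [hide0 i h0'] at hxd
    exact div_ne_ide hxd
  have Einf_mem : ∀ a ∈ E.carrier, ∀ b ∈ E.carrier, a ⊓ b ∈ E.carrier := by
    intro a ha b hb
    have h : a ⊓ b = (aᶜ ⊔ bᶜ)ᶜ := by rw [compl_sup, compl_compl, compl_compl]
    rw [h]
    exact E.compl_mem _ (E.sup_mem _ (E.compl_mem _ ha) _ (E.compl_mem _ hb))
  have Eatom_disj : ∀ a b : α, E.AtomOf a → E.AtomOf b → a ≠ b → a ⊓ b = ⊥ := by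
    intro a b ha hb hab
    rcases ha.2.2 _ (Einf_mem a ha.1 b hb.1) inf_le_left with h | h
    · exact h
    · have hab' : a ≤ b := h ▸ inf_le_right
      rcases hb.2.2 a ha.1 hab' with h' | h'
      · exact absurd h' ha.2.1
      · exact absurd h' hab
  have compsup : ∀ w x y z : α, NA.comp (w ⊔ x) (y ⊔ z) =
      (NA.comp w y ⊔ NA.comp w z) ⊔ (NA.comp x y ⊔ NA.comp x z) := by
    intro w x y z
    rw [NA.sup_comp, NA.comp_sup, NA.comp_sup]
  have hEatom : ∀ i : Fin r, E.AtomOf (aa i) := fun i => (hatoms (aa i)).mpr ⟨i, rfl⟩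
  have pair_sq : ∀ i j : Fin (r + 3), (i : ℕ) ≠ 0 → (j : ℕ) ≠ 0 → (i : ℕ) ≠ (j : ℕ) →
      NA.comp (e i ⊔ e j) (e i ⊔ e j) = ⊤ := by
    intro i j h0i h0j hij
    rw [compsup, hsq i h0i, hsq j h0j, hm i j h0i h0j hij, hm j i h0j h0i (Ne.symm hij)]
    apply eq_top_iff.mpr
    have ht : (e i)ᶜ ⊔ (e j)ᶜ = ⊤ := by rw [← compl_inf, edisj i j hij, compl_bot]
    calc (⊤ : α) = (e i)ᶜ ⊔ (e j)ᶜ := ht.symm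
      _ ≤ _ := sup_le_sup le_sup_left le_sup_right
  have pair_mul : ∀ i j k l : Fin (r + 3), (i : ℕ) ≠ 0 → (j : ℕ) ≠ 0 → (k : ℕ) ≠ 0 →
      (l : ℕ) ≠ 0 → (i : ℕ) ≠ (k : ℕ) → (i : ℕ) ≠ (l : ℕ) → (j : ℕ) ≠ (k : ℕ) →
      (j : ℕ) ≠ (l : ℕ) →
      NA.comp (e i ⊔ e j) (e k ⊔ e l) = (NA.div : α) := by
    intro i j k l hi hj hk hl hik hil hjk hjl
    rw [compsup, hm i k hi hk hik, hm i l hi hl hil, hm j k hj hk hjk, hm j l hj hl hjl,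
      sup_idem, sup_idem]
  have single_pair_mul : ∀ i j k : Fin (r + 3), (i : ℕ) ≠ 0 → (j : ℕ) ≠ 0 → (k : ℕ) ≠ 0 →
      (i : ℕ) ≠ (j : ℕ) → (i : ℕ) ≠ (k : ℕ) →
      NA.comp (e i) (e j ⊔ e k) = (NA.div : α) := by
    intro i j k hi hj hk hij hik
    rw [NA.comp_sup, hm i j hi hj hij, hm i k hi hk hik, sup_idem]
  have atom_not_le_pair : ∀ i j k : Fin (r + 3), (i : ℕ) ≠ (j : ℕ) → (i : ℕ) ≠ (k : ℕ) →
      ¬ (e i ≤ e j ⊔ e k) := by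
    intro i j k hj hk hle
    have h : e i = e i ⊓ (e j ⊔ e k) := (inf_eq_left.mpr hle).symm
    rw [inf_sup_left, edisj i j hj, edisj i k hk, sup_idem] at h
    exact (hatom i).1 h
  have pair_ne : ∀ i j k l : Fin (r + 3), (i : ℕ) ≠ (k : ℕ) → (i : ℕ) ≠ (l : ℕ) →
      e i ⊔ e j ≠ e k ⊔ e l := by
    intro i j k l h1' h2' heq
    exact atom_not_le_pair i k l h1' h2' (heq ▸ le_sup_left)
  constructor
  · constructor
    · intro a b c ha hb hc hne _ x y hx hy hxa hyb
      obtain ⟨i, hi0, rfl⟩ := atom_shape x hx (hxa.trans ha.2)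
      obtain ⟨j, hj0, rfl⟩ := atom_shape y hy (hyb.trans hb.2)
      by_cases hij : (i : ℕ) = (j : ℕ)
      · have hij' : i = j := Fin.ext hij
        subst hij'
        rw [hsq i hi0]
        have hab : a = b := by
          by_contra hne'
          have hd := Eatom_disj a b ha.1 hb.1 hne'
          have h2 : e i ≤ a ⊓ b := le_inf hxa hyb
          exact (hatom i).1 (le_bot_iff.mp (hd ▸ h2))
        have hca : c ≠ a := fun h => hne ⟨hab, hab.symm.trans h.symm⟩
        have hce : c ⊓ e i = ⊥ := by
          have hd := Eatom_disj c a hc.1 ha.1 hca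
          have h2 : c ⊓ e i ≤ c ⊓ a := inf_le_inf_left _ hxa
          exact le_bot_iff.mp (hd ▸ h2)
        exact le_compl_iff_disjoint_right.mpr (disjoint_iff.mpr hce)
      · rw [hm i j hi0 hj0 hij]
        exact hc.2
    · intro a ha haa x y hx hy hxa hya
      obtain ⟨i, hi0, rfl⟩ := atom_shape x hx (hxa.trans ha.2)
      obtain ⟨j, hj0, rfl⟩ := atom_shape y hy (hya.trans ha.2)
      by_cases hij : (i : ℕ) = (j : ℕ)
      · have hij' : i = j := Fin.ext hij
        subst hij'
        rw [hsq i hi0]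
        intro hbot
        have hd : Disjoint a ((e i)ᶜ) := disjoint_iff.mpr (by rw [inf_comm]; exact hbot)
        have hle : a ≤ e i := by
          have h := le_compl_iff_disjoint_right.mpr hd
          rwa [compl_compl] at h
        have haei : a = e i := by
          rcases (hatom i).le_iff.mp hle with h | h
          · exact absurd h ha.1.2.1
          · exact h
        rw [haei, hsq i hi0] at haa
        exact (hatom i).1 (disjoint_self.mp (le_compl_iff_disjoint_right.mp haa))
      · rw [hm i j hi0 hj0 hij, inf_eq_right.mpr ha.2]
        exact ha.1.2.1
  · rw [h1, h2, h3]
    refine ⟨⟨?_, ?_⟩, ⟨?_, ?_⟩, ⟨?_, ?_⟩, ?_, ?_, ?_, ?_, ?_, ?_, ?_, ?_, ?_, ?_⟩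
    · exact h1 ▸ hEatom ⟨1, by omega⟩
    · exact sup_le (atom_le_div _ (by simp)) (atom_le_div _ (by simp))
    · exact h2 ▸ hEatom ⟨2, by omega⟩
    · exact sup_le (atom_le_div _ (by simp)) (atom_le_div _ (by simp))
    · exact h3 ▸ hEatom ⟨3, by omega⟩
    · exact sup_le (atom_le_div _ (by simp)) (atom_le_div _ (by simp))
    · exact pair_ne _ _ _ _ (by simp) (by simp)
    · exact pair_ne _ _ _ _ (by simp) (by simp)
    · exact pair_ne _ _ _ _ (by simp) (by simp)
    · exact pair_sq _ _ (by simp) (by simp) (by simp)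
    · exact pair_sq _ _ (by simp) (by simp) (by simp)
    · exact pair_sq _ _ (by simp) (by simp) (by simp)
    · exact pair_mul _ _ _ _ (by simp) (by simp) (by simp) (by simp) (by simp)
        (by simp) (by simp) (by simp)
    · exact pair_mul _ _ _ _ (by simp) (by simp) (by simp) (by simp) (by simp)
        (by simp) (by simp) (by simp)
    · exact pair_mul _ _ _ _ (by simp) (by simp) (by simp) (by simp) (by simp)
        (by simp) (by simp) (by simp)
    · intro d hd hdnot
      obtain ⟨i, rfl⟩ := (hatoms d).mp hd.1
      have hne0 : (i : ℕ) ≠ 0 := by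
        intro h
        have hi : i = ⟨0, by omega⟩ := Fin.ext h
        rw [hi, h0] at hd
        exact div_ne_ide hd.2
      have hne1 : (i : ℕ) ≠ 1 := by
        intro h
        have hi : i = ⟨1, by omega⟩ := Fin.ext h
        rw [hi, h1] at hdnot
        exact hdnot (Set.mem_insert _ _)
      have hne2 : (i : ℕ) ≠ 2 := by
        intro h
        have hi : i = ⟨2, by omega⟩ := Fin.ext h
        rw [hi, h2] at hdnot
        exact hdnot (Set.mem_insert_of_mem _ (Set.mem_insert _ _))
      have hne3 : (i : ℕ) ≠ 3 := by
        intro h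
        have hi : i = ⟨3, by omega⟩ := Fin.ext h
        rw [hi, h3] at hdnot
        exact hdnot (Set.mem_insert_of_mem _ (Set.mem_insert_of_mem _ rfl))
      have hge : 4 ≤ (i : ℕ) := by omega
      rw [hrest i hge]
      left
      constructor
      · exact single_pair_mul _ _ _ (by show (i : ℕ) + 3 ≠ 0; omega) (by simp) (by simp)
          (by show (i : ℕ) + 3 ≠ 1; omega) (by show (i : ℕ) + 3 ≠ 2; omega)
      · exact single_pair_mul _ _ _ (by show (i : ℕ) + 3 ≠ 0; omega) (by simp) (by simp)
          (by show (i : ℕ) + 3 ≠ 3; omega) (by show (i : ℕ) + 3 ≠ 4; omega)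
end
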